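/- arXiv:1112.3610 — 2 statements merged into one kernel-verified Lean document; each statement's English description precedes it below -/
import Mathlib

section
/- Let f : S₁ × S₂ → ℤ be order-preserving (f(x',y') ≥ f(x,y) whenever x' ≥ x, y' ≥ y), and let f̃ be its extension to well-tempered scoring games. If G₁ ≳ H₁ (S₁-valued) and G₂ ≳ H₂ (S₂-valued), then f̃(G₁,G₂) ≳ f̃(H₁,H₂). -/
/-- Well-tempered scoring game trees: an integer (final score) or a position
with lists of Left and Right options. -/
inductive WT : Type where
  | int : ℤ → WT
  | node : List WT → List WT → WT

namespace WT

/-- Left options. -/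
def lopts : WT → List WT
  | int _ => []
  | node L _ => L

/-- Right options. -/
def ropts : WT → List WT
  | int _ => []
  | node _ R => R

theorem sizeOf_lt_of_mem_lopts : ∀ {G g : WT}, g ∈ G.lopts → sizeOf g < sizeOf G := by
  intro G g h
  cases G with
  | int n => simp [lopts] at h
  | node L R =>
    simp only [lopts] at h
    have h1 := List.sizeOf_lt_of_mem h
    have h2 : sizeOf (WT.node L R) = 1 + sizeOf L + sizeOf R := by simp
    omega

theorem sizeOf_lt_of_mem_ropts : ∀ {G g : WT}, g ∈ G.ropts → sizeOf g < sizeOf G := by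
  intro G g h
  cases G with
  | int n => simp [ropts] at h
  | node L R =>
    simp only [ropts] at h
    have h1 := List.sizeOf_lt_of_mem h
    have h2 : sizeOf (WT.node L R) = 1 + sizeOf L + sizeOf R := by simp
    omega

/-- Disjunctive sum of two games. -/
def add (G H : WT) : WT :=
  match G, H with
  | int m, int n => int (m + n)
  | G, H =>
    node ((G.lopts.attach.map fun g => add g.1 H) ++ (H.lopts.attach.map fun h => add G h.1))
         ((G.ropts.attach.map fun g => add g.1 H) ++ (H.ropts.attach.map fun h => add G h.1))
termination_by sizeOf G + sizeOf H
decreasing_by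
  all_goals
    first
      | (have := sizeOf_lt_of_mem_lopts g.2; omega)
      | (have := sizeOf_lt_of_mem_lopts h.2; omega)
      | (have := sizeOf_lt_of_mem_ropts g.2; omega)
      | (have := sizeOf_lt_of_mem_ropts h.2; omega)

/-- Negation of a game: swap players and negate scores. -/
def neg : WT → WT
  | int n => int (-n)
  | node L R =>
    node ((WT.node L R).ropts.attach.map fun g => neg g.1)
         ((WT.node L R).lopts.attach.map fun g => neg g.1)
termination_by G => sizeOf G
decreasing_by
  all_goals
    first
      | exact sizeOf_lt_of_mem_lopts g.2
      | exact sizeOf_lt_of_mem_ropts g.2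

def lmax : List ℤ → ℤ
  | [] => 0
  | x :: xs => xs.foldl max x

def lmin : List ℤ → ℤ
  | [] => 0
  | x :: xs => xs.foldl min x

/-- The pair (left outcome, right outcome). -/
def out : WT → ℤ × ℤ
  | int n => (n, n)
  | node L R =>
    (lmax ((WT.node L R).lopts.attach.map fun g => (out g.1).2),
     lmin ((WT.node L R).ropts.attach.map fun g => (out g.1).1))
termination_by G => sizeOf G
decreasing_by
  all_goals
    first
      | exact sizeOf_lt_of_mem_lopts g.2
      | exact sizeOf_lt_of_mem_ropts g.2

/-- Left outcome L(G): optimal score when Left moves first. -/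
def Lout (G : WT) : ℤ := G.out.1

/-- Right outcome R(G): optimal score when Right moves first. -/
def Rout (G : WT) : ℤ := G.out.2

/-- `IsWT G p` : `G` is a well-tempered game of parity `p`
(`false` = even-tempered, `true` = odd-tempered). -/
inductive IsWT : WT → Bool → Prop where
  | int (n : ℤ) : IsWT (WT.int n) false
  | node {L R : List WT} {p : Bool} (hL : L ≠ []) (hR : R ≠ [])
      (hLp : ∀ g ∈ L, IsWT g p) (hRp : ∀ g ∈ R, IsWT g p) :
      IsWT (WT.node L R) (!p)

/-- `G` is a well-tempered game (of some parity). -/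
def Wt (G : WT) : Prop := ∃ p, IsWT G p

/-- Parity, computed structurally (`false` = even-tempered, `true` = odd-tempered;
agrees with `IsWT` on well-tempered games). -/
def par : WT → Bool
  | int _ => false
  | node [] _ => true
  | node (g :: _) _ => !(par g)

/-- Final score under optimal play when Left moves last. -/
def Lf (G : WT) : ℤ := if G.par then G.Lout else G.Rout

/-- Final score under optimal play when Right moves last. -/
def Rf (G : WT) : ℤ := if G.par then G.Rout else G.Lout

/-- `G ≲ H` : for every well-tempered `X`, `L(G+X) ≤ L(H+X)` and `R(G+X) ≤ R(H+X)`. -/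
def Le (G H : WT) : Prop :=
  ∀ X : WT, X.Wt → (G.add X).Lout ≤ (H.add X).Lout ∧ (G.add X).Rout ≤ (H.add X).Rout

/-- `G ≳ H`. -/
def Ge (G H : WT) : Prop := Le H G

/-- `G ≈ H` : equivalence of scoring games. -/
def Equiv (G H : WT) : Prop :=
  ∀ X : WT, X.Wt → (G.add X).Lout = (H.add X).Lout ∧ (G.add X).Rout = (H.add X).Rout

/-- `G` and `H` are well-tempered with the same parity. -/
def SamePar (G H : WT) : Prop := ∃ p, IsWT G p ∧ IsWT H p

/-- `G` takes values in `S`: every integer subgame lies in `S`. -/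
inductive Valued (S : Set ℤ) : WT → Prop where
  | int {n : ℤ} : n ∈ S → Valued S (WT.int n)
  | node {L R : List WT} : (∀ g ∈ L, Valued S g) → (∀ g ∈ R, Valued S g) →
      Valued S (WT.node L R)

/-- `Subgame H G` : `H` is a subgame of `G`. -/
inductive Subgame : WT → WT → Prop where
  | refl (G : WT) : Subgame G G
  | left {H G' : WT} {L R : List WT} : G' ∈ L → Subgame H G' → Subgame H (WT.node L R)
  | right {H G' : WT} {L R : List WT} : G' ∈ R → Subgame H G' → Subgame H (WT.node L R)

/-- `gap G p` : supremum of `R(H) - L(H)` over subgames `H` of `G` of parity `p`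
(as an element of `WithBot ℤ`; the supremum of the empty set is `⊥ = -∞`). -/
noncomputable def gap (G : WT) (p : Bool) : WithBot ℤ :=
  sSup {x : WithBot ℤ | ∃ H : WT, Subgame H G ∧ IsWT H p ∧ x = ((H.Rout - H.Lout : ℤ) : WithBot ℤ)}

/-- Heating by `t`. -/
def heat (t : ℤ) : WT → WT
  | int n => int n
  | node L R =>
    node ((WT.node L R).lopts.attach.map fun g => (WT.int t).add (heat t g.1))
         ((WT.node L R).ropts.attach.map fun g => (WT.int (-t)).add (heat t g.1))
termination_by G => sizeOf G
decreasing_by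
  all_goals
    first
      | exact sizeOf_lt_of_mem_lopts g.2
      | exact sizeOf_lt_of_mem_ropts g.2

end WT

namespace WT

/-- The extension of a binary function `f` to games: play the two games in parallel and
combine the final scores with `f`. -/
def fext2 (f : ℤ → ℤ → ℤ) (G H : WT) : WT :=
  match G, H with
  | int m, int n => int (f m n)
  | G, H =>
    node ((G.lopts.attach.map fun g => fext2 f g.1 H) ++ (H.lopts.attach.map fun h => fext2 f G h.1))
         ((G.ropts.attach.map fun g => fext2 f g.1 H) ++ (H.ropts.attach.map fun h => fext2 f G h.1))
termination_by sizeOf G + sizeOf H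
decreasing_by
  all_goals
    first
      | (have := sizeOf_lt_of_mem_lopts g.2; omega)
      | (have := sizeOf_lt_of_mem_lopts h.2; omega)
      | (have := sizeOf_lt_of_mem_ropts g.2; omega)
      | (have := sizeOf_lt_of_mem_ropts h.2; omega)

end WT

namespace WT

/-! ### lmax / lmin lemmas -/

theorem foldl_max_le_iff : ∀ (l : List ℤ) (a b : ℤ), l.foldl max a ≤ b ↔ a ≤ b ∧ ∀ x ∈ l, x ≤ b := by
  intro l
  induction l with
  | nil => simp
  | cons c cs ih =>
    intro a b
    simp only [List.foldl, ih (max a c) b, max_le_iff, List.mem_cons]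
    constructor
    · rintro ⟨⟨h1, h2⟩, h3⟩
      exact ⟨h1, fun x hx => by rcases hx with rfl | hx; exact h2; exact h3 x hx⟩
    · rintro ⟨h1, h2⟩
      exact ⟨⟨h1, h2 c (Or.inl rfl)⟩, fun x hx => h2 x (Or.inr hx)⟩

theorem foldl_max_mem : ∀ (l : List ℤ) (a : ℤ), l.foldl max a ∈ a :: l := by
  intro l
  induction l with
  | nil => simp [List.foldl]
  | cons c cs ih =>
    intro a
    simp only [List.foldl]
    rcases List.mem_cons.mp (ih (max a c)) with h | h
    · rcases max_choice a c with h' | h' <;> rw [h] at * <;> simp [h']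
    · simp [h]

theorem foldl_min_le_iff : ∀ (l : List ℤ) (a b : ℤ), b ≤ l.foldl min a ↔ b ≤ a ∧ ∀ x ∈ l, b ≤ x := by
  intro l
  induction l with
  | nil => simp
  | cons c cs ih =>
    intro a b
    simp only [List.foldl, ih (min a c) b, le_min_iff, List.mem_cons]
    constructor
    · rintro ⟨⟨h1, h2⟩, h3⟩
      exact ⟨h1, fun x hx => by rcases hx with rfl | hx; exact h2; exact h3 x hx⟩
    · rintro ⟨h1, h2⟩
      exact ⟨⟨h1, h2 c (Or.inl rfl)⟩, fun x hx => h2 x (Or.inr hx)⟩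

theorem foldl_min_mem : ∀ (l : List ℤ) (a : ℤ), l.foldl min a ∈ a :: l := by
  intro l
  induction l with
  | nil => simp [List.foldl]
  | cons c cs ih =>
    intro a
    simp only [List.foldl]
    rcases List.mem_cons.mp (ih (min a c)) with h | h
    · rcases min_choice a c with h' | h' <;> rw [h] at * <;> simp [h']
    · simp [h]

theorem le_lmax {l : List ℤ} {x : ℤ} (h : x ∈ l) : x ≤ lmax l := by
  match l with
  | a :: xs =>
    show x ≤ xs.foldl max a
    by_contra hc
    push_neg at hc
    have := (foldl_max_le_iff xs a (xs.foldl max a)).mp le_rfl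
    rcases List.mem_cons.mp h with rfl | h
    · omega
    · have := this.2 x h; omega

theorem lmax_le {l : List ℤ} {b : ℤ} (hne : l ≠ []) (h : ∀ x ∈ l, x ≤ b) : lmax l ≤ b := by
  match l with
  | a :: xs =>
    show xs.foldl max a ≤ b
    rw [foldl_max_le_iff]
    exact ⟨h a (List.mem_cons_self), fun x hx => h x (List.mem_cons_of_mem a hx)⟩

theorem lmax_mem {l : List ℤ} (hne : l ≠ []) : lmax l ∈ l := by
  match l with
  | a :: xs => exact foldl_max_mem xs a

theorem lmin_le {l : List ℤ} {x : ℤ} (h : x ∈ l) : lmin l ≤ x := by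
  match l with
  | a :: xs =>
    show xs.foldl min a ≤ x
    by_contra hc
    push_neg at hc
    have := (foldl_min_le_iff xs a (xs.foldl min a)).mp le_rfl
    rcases List.mem_cons.mp h with rfl | h
    · omega
    · have := this.2 x h; omega

theorem le_lmin {l : List ℤ} {b : ℤ} (hne : l ≠ []) (h : ∀ x ∈ l, b ≤ x) : b ≤ lmin l := by
  match l with
  | a :: xs =>
    show b ≤ xs.foldl min a
    rw [foldl_min_le_iff]
    exact ⟨h a (List.mem_cons_self), fun x hx => h x (List.mem_cons_of_mem a hx)⟩

theorem lmin_mem {l : List ℤ} (hne : l ≠ []) : lmin l ∈ l := by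
  match l with
  | a :: xs => exact foldl_min_mem xs a

/-! ### unfolding lemmas -/

theorem add_int_int (m n : ℤ) : add (int m) (int n) = int (m + n) := by rw [add]

theorem add_node_left (L R : List WT) (H : WT) :
    add (node L R) H = node ((L.map fun g => add g H) ++ (H.lopts.map fun h => add (node L R) h))
                            ((R.map fun g => add g H) ++ (H.ropts.map fun h => add (node L R) h)) := by
  cases H with
  | int n => rw [add] <;> simp [lopts, ropts, List.map_attach_eq_pmap]
  | node L' R' => rw [add] <;> simp [lopts, ropts, List.map_attach_eq_pmap]

theorem add_int_node (m : ℤ) (L R : List WT) :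
    add (int m) (node L R) = node (L.map fun h => add (int m) h) (R.map fun h => add (int m) h) := by
  rw [add] <;> simp [lopts, ropts, List.map_attach_eq_pmap]

theorem fext2_int_int (f : ℤ → ℤ → ℤ) (m n : ℤ) : fext2 f (int m) (int n) = int (f m n) := by
  rw [fext2]

theorem fext2_node_left (f : ℤ → ℤ → ℤ) (L R : List WT) (H : WT) :
    fext2 f (node L R) H =
      node ((L.map fun g => fext2 f g H) ++ (H.lopts.map fun h => fext2 f (node L R) h))
           ((R.map fun g => fext2 f g H) ++ (H.ropts.map fun h => fext2 f (node L R) h)) := by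
  cases H with
  | int n => rw [fext2] <;> simp [lopts, ropts, List.map_attach_eq_pmap]
  | node L' R' => rw [fext2] <;> simp [lopts, ropts, List.map_attach_eq_pmap]

theorem fext2_int_node (f : ℤ → ℤ → ℤ) (m : ℤ) (L R : List WT) :
    fext2 f (int m) (node L R) =
      node (L.map fun h => fext2 f (int m) h) (R.map fun h => fext2 f (int m) h) := by
  rw [fext2] <;> simp [lopts, ropts, List.map_attach_eq_pmap]

theorem Lout_int (n : ℤ) : Lout (int n) = n := by show (out (int n)).1 = n; rw [out]
theorem Rout_int (n : ℤ) : Rout (int n) = n := by show (out (int n)).2 = n; rw [out]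

theorem Lout_node (L R : List WT) : Lout (node L R) = lmax (L.map Rout) := by
  show (out (node L R)).1 = _
  rw [out]
  simp only [lopts, List.map_attach_eq_pmap, List.pmap_eq_map]
  rfl

theorem Rout_node (L R : List WT) : Rout (node L R) = lmin (R.map Lout) := by
  show (out (node L R)).2 = _
  rw [out]
  simp only [ropts, List.map_attach_eq_pmap, List.pmap_eq_map]
  rfl

/-! ### wt and parity -/

theorem indSize {P : WT → Prop} (h : ∀ G, (∀ g, sizeOf g < sizeOf G → P g) → P G) (G : WT) :
    P G :=
  h G (fun g _ => indSize h g)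
termination_by sizeOf G
decreasing_by assumption

theorem indSize2 {P : WT → WT → Prop}
    (h : ∀ G H, (∀ g k, sizeOf g + sizeOf k < sizeOf G + sizeOf H → P g k) → P G H)
    (G H : WT) : P G H :=
  h G H (fun g k _ => indSize2 h g k)
termination_by sizeOf G + sizeOf H
decreasing_by assumption

theorem wt_mem_lopts {G : WT} {p : Bool} (h : IsWT G p) {g : WT} (hg : g ∈ G.lopts) :
    IsWT g (!p) := by
  cases h with
  | int => simp [lopts] at hg
  | node hL hR hLp hRp => simpa using hLp g hg

theorem wt_mem_ropts {G : WT} {p : Bool} (h : IsWT G p) {g : WT} (hg : g ∈ G.ropts) :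
    IsWT g (!p) := by
  cases h with
  | int => simp [ropts] at hg
  | node hL hR hLp hRp => simpa using hRp g hg

theorem wt_lopts_ne_nil {L R : List WT} {p : Bool} (h : IsWT (node L R) p) : L ≠ [] := by
  cases h; assumption

theorem wt_ropts_ne_nil {L R : List WT} {p : Bool} (h : IsWT (node L R) p) : R ≠ [] := by
  cases h; assumption

theorem par_eq : ∀ {G : WT} {p : Bool}, IsWT G p → G.par = p := by
  intro G
  induction G using indSize with
  | h G ih =>
    intro p h
    cases h with
    | int => rfl
    | @node L R p' hL hR hLp hRp =>
      match L, hL with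
      | g :: L', _ =>
        have hg := ih g (by have := sizeOf_lt_of_mem_lopts (G := node (g :: L') R) (g := g) (by simp [lopts]); exact this) (hLp g (by simp))
        show par (node (g :: L') R) = !p'
        simp only [par, hg]

theorem wt_unique {G : WT} {p q : Bool} (h1 : IsWT G p) (h2 : IsWT G q) : p = q := by
  rw [← par_eq h1, ← par_eq h2]

theorem wt_int_iff {n : ℤ} {p : Bool} : IsWT (int n) p ↔ p = false := by
  constructor
  · intro h; cases h; rfl
  · rintro rfl; exact IsWT.int n

/-- well-temperedness of sums -/
theorem wt_add : ∀ {G H : WT} {p q : Bool}, IsWT G p → IsWT H q → IsWT (WT.add G H) (xor p q) := by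
  intro G H
  induction G, H using indSize2 with
  | h G H ih =>
    intro p q h1 h2
    cases h1 with
    | int m =>
      cases h2 with
      | int n => rw [add_int_int]; exact IsWT.int _
      | @node L R q' hL hR hLp hRp =>
        rw [add_int_node]
        show IsWT _ (xor false (!q'))
        have : xor false (!q') = !(xor false q') := by simp
        rw [this]
        refine IsWT.node (by simpa using hL) (by simpa using hR) ?_ ?_
        · intro g hg
          rcases List.mem_map.mp hg with ⟨h, hh, rfl⟩
          exact ih _ _ (by have := sizeOf_lt_of_mem_lopts (G := node L R) (g := h) (by simpa [lopts]); omega)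
            (IsWT.int m) (hLp h hh)
        · intro g hg
          rcases List.mem_map.mp hg with ⟨h, hh, rfl⟩
          exact ih _ _ (by have := sizeOf_lt_of_mem_ropts (G := node L R) (g := h) (by simpa [ropts]); omega)
            (IsWT.int m) (hRp h hh)
    | @node L R p' hL hR hLp hRp =>
      rw [add_node_left]
      have hx : xor (!p') q = !(xor p' q) := by cases p' <;> cases q <;> rfl
      rw [hx]
      have hLbig : ∀ g ∈ L, sizeOf g < sizeOf (node L R) :=
        fun g hg => sizeOf_lt_of_mem_lopts (G := node L R) (by simpa [lopts])
      have hRbig : ∀ g ∈ R, sizeOf g < sizeOf (node L R) :=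
        fun g hg => sizeOf_lt_of_mem_ropts (G := node L R) (by simpa [ropts])
      refine IsWT.node ?_ ?_ ?_ ?_
      · simp [hL]
      · simp [hR]
      · intro g hg
        rcases List.mem_append.mp hg with hg | hg
        · rcases List.mem_map.mp hg with ⟨k, hk, rfl⟩
          exact ih _ _ (by have := hLbig k hk; omega) (hLp k hk) h2
        · rcases List.mem_map.mp hg with ⟨k, hk, rfl⟩
          have hkH : IsWT k (!q) := wt_mem_lopts h2 hk
          have hb : xor (!p') (!q) = xor p' q := by cases p' <;> cases q <;> rfl
          exact hb ▸ ih _ _ (by have := sizeOf_lt_of_mem_lopts (G := H) hk; omega)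
            (IsWT.node hL hR hLp hRp) hkH
      · intro g hg
        rcases List.mem_append.mp hg with hg | hg
        · rcases List.mem_map.mp hg with ⟨k, hk, rfl⟩
          exact ih _ _ (by have := hRbig k hk; omega) (hRp k hk) h2
        · rcases List.mem_map.mp hg with ⟨k, hk, rfl⟩
          have hkH : IsWT k (!q) := wt_mem_ropts h2 hk
          have hb : xor (!p') (!q) = xor p' q := by cases p' <;> cases q <;> rfl
          exact hb ▸ ih _ _ (by have := sizeOf_lt_of_mem_ropts (G := H) hk; omega)
            (IsWT.node hL hR hLp hRp) hkH

/-! ### options of sums -/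

theorem lopts_add (G H : WT) :
    (add G H).lopts = (G.lopts.map fun g => add g H) ++ (H.lopts.map fun h => add G h) := by
  cases G with
  | int m =>
    cases H with
    | int n => simp [add_int_int, lopts]
    | node L R => rw [add_int_node]; simp [lopts]
  | node L R => rw [add_node_left]; simp [lopts]

theorem ropts_add (G H : WT) :
    (add G H).ropts = (G.ropts.map fun g => add g H) ++ (H.ropts.map fun h => add G h) := by
  cases G with
  | int m =>
    cases H with
    | int n => simp [add_int_int, ropts]
    | node L R => rw [add_int_node]; simp [ropts]
  | node L R => rw [add_node_left]; simp [ropts]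

theorem lopts_fext2 (f : ℤ → ℤ → ℤ) (G H : WT) (hni : ¬(∃ m n, G = int m ∧ H = int n)) :
    (fext2 f G H).lopts =
      (G.lopts.map fun g => fext2 f g H) ++ (H.lopts.map fun h => fext2 f G h) := by
  cases G with
  | int m =>
    cases H with
    | int n => exact absurd ⟨m, n, rfl, rfl⟩ hni
    | node L R => rw [fext2_int_node]; simp [lopts]
  | node L R => rw [fext2_node_left]; simp [lopts]

theorem ropts_fext2 (f : ℤ → ℤ → ℤ) (G H : WT) (hni : ¬(∃ m n, G = int m ∧ H = int n)) :
    (fext2 f G H).ropts =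
      (G.ropts.map fun g => fext2 f g H) ++ (H.ropts.map fun h => fext2 f G h) := by
  cases G with
  | int m =>
    cases H with
    | int n => exact absurd ⟨m, n, rfl, rfl⟩ hni
    | node L R => rw [fext2_int_node]; simp [ropts]
  | node L R => rw [fext2_node_left]; simp [ropts]

/-! ### shifting by an integer -/

theorem lmax_map_add : ∀ (l : List ℤ) (c : ℤ), l ≠ [] → lmax (l.map (· + c)) = lmax l + c := by
  intro l c hne
  match l with
  | a :: xs =>
    show (xs.map (· + c)).foldl max (a + c) = xs.foldl max a + c
    clear hne
    induction xs generalizing a with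
    | nil => simp [List.foldl]
    | cons b bs ih =>
      simp only [List.map, List.foldl]
      have : (a + c) ⊔ (b + c) = (a ⊔ b) + c := max_add_add_right a b c
      rw [this]
      exact ih (max a b)

theorem lmin_map_add : ∀ (l : List ℤ) (c : ℤ), l ≠ [] → lmin (l.map (· + c)) = lmin l + c := by
  intro l c hne
  match l with
  | a :: xs =>
    show (xs.map (· + c)).foldl min (a + c) = xs.foldl min a + c
    clear hne
    induction xs generalizing a with
    | nil => simp [List.foldl]
    | cons b bs ih =>
      simp only [List.map, List.foldl]
      have : (a + c) ⊓ (b + c) = (a ⊓ b) + c := min_add_add_right a b c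
      rw [this]
      exact ih (min a b)

theorem out_add_int : ∀ {G : WT} {p : Bool}, IsWT G p → ∀ (c : ℤ),
    Lout (add G (int c)) = Lout G + c ∧ Rout (add G (int c)) = Rout G + c := by
  intro G
  induction G using indSize with
  | h G ih =>
    intro p hG c
    cases hG with
    | int n => rw [add_int_int]; simp [Lout_int, Rout_int]
    | @node L R p' hL hR hLp hRp =>
      rw [add_node_left]
      simp only [lopts, ropts, List.map_nil, List.append_nil]
      constructor
      · rw [Lout_node, Lout_node, List.map_map]
        have h1 : L.map (Rout ∘ fun g => add g (int c)) = (L.map Rout).map (· + c) := by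
          rw [List.map_map]
          refine List.map_congr_left ?_
          intro g hg
          exact (ih g (sizeOf_lt_of_mem_lopts (G := node L R) (by simpa [lopts])) (hLp g hg) c).2
        rw [h1, lmax_map_add _ c (by simpa using hL)]
      · rw [Rout_node, Rout_node, List.map_map]
        have h1 : R.map (Lout ∘ fun g => add g (int c)) = (R.map Lout).map (· + c) := by
          rw [List.map_map]
          refine List.map_congr_left ?_
          intro g hg
          exact (ih g (sizeOf_lt_of_mem_ropts (G := node L R) (by simpa [ropts])) (hRp g hg) c).1
        rw [h1, lmin_map_add _ c (by simpa using hR)]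

theorem Lout_add_int {G : WT} {p : Bool} (hG : IsWT G p) (c : ℤ) :
    Lout (add G (int c)) = Lout G + c := (out_add_int hG c).1

theorem Rout_add_int {G : WT} {p : Bool} (hG : IsWT G p) (c : ℤ) :
    Rout (add G (int c)) = Rout G + c := (out_add_int hG c).2

/-! ### associativity of add -/

theorem indSize3 {P : WT → WT → WT → Prop}
    (h : ∀ G H K, (∀ g k j, sizeOf g + sizeOf k + sizeOf j < sizeOf G + sizeOf H + sizeOf K → P g k j) → P G H K)
    (G H K : WT) : P G H K :=
  h G H K (fun g k j _ => indSize3 h g k j)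
termination_by sizeOf G + sizeOf H + sizeOf K
decreasing_by assumption

theorem add_assoc : ∀ (G H K : WT), add (add G H) K = add G (add H K) := by
  intro G H K
  induction G, H, K using indSize3 with
  | h G H K ih =>
    have hsz : ∀ {A : WT} (g : WT), g ∈ A.lopts ∨ g ∈ A.ropts → sizeOf g < sizeOf A := by
      rintro A g (hg | hg)
      · exact sizeOf_lt_of_mem_lopts hg
      · exact sizeOf_lt_of_mem_ropts hg
    by_cases hGH : ∃ m n, G = int m ∧ H = int n
    · obtain ⟨m, n, rfl, rfl⟩ := hGH
      cases K with
      | int k => simp [add_int_int]; ring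
      | node L R =>
        rw [add_int_int, add_int_node, add_int_node, add_int_node]
        congr 1 <;> · rw [List.map_map]
                      refine List.map_congr_left ?_
                      intro x hx
                      have := ih (int m) (int n) x (by
                        have : sizeOf x < sizeOf (node L R) := by
                          rcases List.mem_map.mp (List.mem_map_of_mem (f := id) hx) with _
                          first
                          | exact hsz x (Or.inl (by simpa [lopts]))
                          | exact hsz x (Or.inr (by simpa [ropts]))
                        omega)
                      simpa [add_int_int] using this
    · -- G, H not both int: both sides are nodes
      have ihG : ∀ g ∈ G.lopts ++ G.ropts, add (add g H) K = add g (add H K) := by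
        intro g hg
        refine ih g H K ?_
        rcases List.mem_append.mp hg with hg | hg
        · have := sizeOf_lt_of_mem_lopts hg; omega
        · have := sizeOf_lt_of_mem_ropts hg; omega
      have ihH : ∀ h ∈ H.lopts ++ H.ropts, add (add G h) K = add G (add h K) := by
        intro h hh
        refine ih G h K ?_
        rcases List.mem_append.mp hh with hh | hh
        · have := sizeOf_lt_of_mem_lopts hh; omega
        · have := sizeOf_lt_of_mem_ropts hh; omega
      have ihK : ∀ k ∈ K.lopts ++ K.ropts, add (add G H) k = add G (add H k) := by
        intro k hk
        refine ih G H k ?_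
        rcases List.mem_append.mp hk with hk | hk
        · have := sizeOf_lt_of_mem_lopts hk; omega
        · have := sizeOf_lt_of_mem_ropts hk; omega
      have hLHS : add (add G H) K = node ((add (add G H) K).lopts) ((add (add G H) K).ropts) := by
        cases hGHn : add G H with
        | int m =>
          exfalso
          cases G with
          | int a => cases H with
            | int b => exact hGH ⟨a, b, rfl, rfl⟩
            | node L R => rw [add_int_node] at hGHn; exact WT.noConfusion hGHn
          | node L R => rw [add_node_left] at hGHn; exact WT.noConfusion hGHn
        | node L R =>
          cases K with
          | int k => rw [add_node_left]; simp [lopts, ropts]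
          | node L' R' => rw [add_node_left]; simp [lopts, ropts]
      have hRHS : add G (add H K) = node ((add G (add H K)).lopts) ((add G (add H K)).ropts) := by
        cases G with
        | int a =>
          cases hHKn : add H K with
          | int m =>
            exfalso
            cases H with
            | int b =>
              cases K with
              | int ck => exact hGH ⟨a, b, rfl, rfl⟩
              | node L R => rw [add_int_node] at hHKn; exact WT.noConfusion hHKn
            | node L R => rw [add_node_left] at hHKn; exact WT.noConfusion hHKn
          | node L R => rw [add_int_node]; simp [lopts, ropts]
        | node L R => rw [add_node_left]; simp [lopts, ropts]
      rw [hLHS, hRHS]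
      congr 1
      · rw [lopts_add, lopts_add, lopts_add, lopts_add]
        simp only [List.map_append, List.map_map, List.append_assoc]
        congr 1
        · exact List.map_congr_left fun g hg => ihG g (List.mem_append.mpr (Or.inl hg))
        congr 1
        · exact List.map_congr_left fun h hh => ihH h (List.mem_append.mpr (Or.inl hh))
        · exact List.map_congr_left fun k hk => ihK k (List.mem_append.mpr (Or.inl hk))
      · rw [ropts_add, ropts_add, ropts_add, ropts_add]
        simp only [List.map_append, List.map_map, List.append_assoc]
        congr 1
        · exact List.map_congr_left fun g hg => ihG g (List.mem_append.mpr (Or.inr hg))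
        congr 1
        · exact List.map_congr_left fun h hh => ihH h (List.mem_append.mpr (Or.inr hh))
        · exact List.map_congr_left fun k hk => ihK k (List.mem_append.mpr (Or.inr hk))

/-! ### bounds -/

inductive Bnd (M : ℤ) : WT → Prop where
  | int {n : ℤ} : -M ≤ n → n ≤ M → Bnd M (WT.int n)
  | node {L R : List WT} : (∀ g ∈ L, Bnd M g) → (∀ g ∈ R, Bnd M g) → Bnd M (WT.node L R)

theorem bnd_mono : ∀ {G : WT} {M M' : ℤ}, M ≤ M' → Bnd M G → Bnd M' G := by
  intro G
  induction G using indSize with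
  | h G ih =>
    intro M M' hMM h
    cases h with
    | int h1 h2 => exact Bnd.int (by omega) (by omega)
    | @node L R hL hR =>
      refine Bnd.node ?_ ?_
      · exact fun g hg => ih g (sizeOf_lt_of_mem_lopts (G := node L R) (by simpa [lopts])) hMM (hL g hg)
      · exact fun g hg => ih g (sizeOf_lt_of_mem_ropts (G := node L R) (by simpa [ropts])) hMM (hR g hg)

theorem bnd_exists : ∀ (G : WT), ∃ M, 0 ≤ M ∧ Bnd M G := by
  intro G
  induction G using indSize with
  | h G ih =>
    cases G with
    | int n => exact ⟨|n|, abs_nonneg n, Bnd.int (neg_abs_le n) (le_abs_self n)⟩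
    | node L R =>
      have key : ∀ (l : List WT), (∀ g ∈ l, sizeOf g < sizeOf (node L R)) →
          ∃ M, 0 ≤ M ∧ ∀ g ∈ l, Bnd M g := by
        intro l
        induction l with
        | nil => exact fun _ => ⟨0, le_rfl, by simp⟩
        | cons a as ihl =>
          intro hs
          obtain ⟨M1, hM1, hB1⟩ := ih a (hs a (by simp))
          obtain ⟨M2, hM2, hB2⟩ := ihl (fun g hg => hs g (by simp [hg]))
          refine ⟨max M1 M2, le_max_of_le_left hM1, ?_⟩
          intro g hg
          rcases List.mem_cons.mp hg with rfl | hg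
          · exact bnd_mono (le_max_left _ _) hB1
          · exact bnd_mono (le_max_right _ _) (hB2 g hg)
      obtain ⟨M1, h1, hB1⟩ := key L (fun g hg => sizeOf_lt_of_mem_lopts (G := node L R) (by simpa [lopts]))
      obtain ⟨M2, h2, hB2⟩ := key R (fun g hg => sizeOf_lt_of_mem_ropts (G := node L R) (by simpa [ropts]))
      refine ⟨max M1 M2, le_max_of_le_left h1, Bnd.node ?_ ?_⟩
      · exact fun g hg => bnd_mono (le_max_left _ _) (hB1 g hg)
      · exact fun g hg => bnd_mono (le_max_right _ _) (hB2 g hg)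

theorem out_bnd : ∀ {G : WT} {p : Bool} {M : ℤ}, IsWT G p → Bnd M G →
    (-M ≤ Lout G ∧ Lout G ≤ M) ∧ (-M ≤ Rout G ∧ Rout G ≤ M) := by
  intro G
  induction G using indSize with
  | h G ih =>
    intro p M hG hB
    cases hG with
    | int n =>
      cases hB with
      | int h1 h2 => simp [Lout_int, Rout_int]; omega
    | @node L R p' hL hR hLp hRp =>
      cases hB with
      | node hBL hBR =>
        have hLne : L.map Rout ≠ [] := by simpa using hL
        have hRne : R.map Lout ≠ [] := by simpa using hR
        have ihL : ∀ x ∈ L.map Rout, -M ≤ x ∧ x ≤ M := by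
          intro x hx
          rcases List.mem_map.mp hx with ⟨g, hg, rfl⟩
          have := ih g (sizeOf_lt_of_mem_lopts (G := node L R) (by simpa [lopts])) (hLp g hg) (hBL g hg)
          exact this.2
        have ihR : ∀ x ∈ R.map Lout, -M ≤ x ∧ x ≤ M := by
          intro x hx
          rcases List.mem_map.mp hx with ⟨g, hg, rfl⟩
          have := ih g (sizeOf_lt_of_mem_ropts (G := node L R) (by simpa [ropts])) (hRp g hg) (hBR g hg)
          exact this.1
        rw [Lout_node, Rout_node]
        refine ⟨⟨?_, ?_⟩, ?_, ?_⟩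
        · exact le_trans (ihL _ (lmax_mem hLne)).1 (le_lmax (lmax_mem hLne))
        · exact lmax_le hLne (fun x hx => (ihL x hx).2)
        · exact le_lmin hRne (fun x hx => (ihR x hx).1)
        · exact le_trans (lmin_le (lmin_mem hRne)) (ihR _ (lmin_mem hRne)).2

/-! ### the σ gadget -/

def sig (n : ℤ) : WT := node [int n] [int (-n)]

theorem wt_sig (n : ℤ) : IsWT (sig n) true := by
  have : IsWT (node [int n] [int (-n)]) (!false) := by
    refine IsWT.node (by simp) (by simp) ?_ ?_ <;>
      · intro g hg
        simp at hg
        subst hg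
        exact IsWT.int _
  simpa [sig] using this

theorem lmax_eq {l : List ℤ} {a : ℤ} (h : a ∈ l) (h2 : ∀ x ∈ l, x ≤ a) : lmax l = a :=
  le_antisymm (lmax_le (by rintro rfl; simp at h) h2) (le_lmax h)

theorem lmin_eq {l : List ℤ} {a : ℤ} (h : a ∈ l) (h2 : ∀ x ∈ l, a ≤ x) : lmin l = a :=
  le_antisymm (lmin_le h) (le_lmin (by rintro rfl; simp at h) h2)

theorem out_add_sig : ∀ {W : WT} {p : Bool} {M n : ℤ}, IsWT W p → Bnd M W → M ≤ n →
    Lout (add W (sig n)) = Rout W + n ∧ Rout (add W (sig n)) = Lout W - n := by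
  intro W
  induction W using indSize with
  | h W ih =>
    intro p M n hW hB hMn
    have hbd := out_bnd hW hB
    cases hW with
    | int w =>
      rw [show sig n = node [int n] [int (-n)] from rfl, add_int_node]
      simp only [List.map_cons, List.map_nil, add_int_int]
      rw [Lout_node, Rout_node]
      simp only [List.map_cons, List.map_nil, Rout_int, Lout_int, lmax, lmin, List.foldl_nil]
      constructor <;> (try trivial) <;> ring_nf
    | @node L R p' hL hR hLp hRp =>
      cases hB with
      | node hBL hBR =>
        rw [add_node_left]
        simp only [show (sig n).lopts = [int n] from rfl, show (sig n).ropts = [int (-n)] from rfl,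
          List.map_cons, List.map_nil]
        have hWwt : IsWT (node L R) (!p') := IsWT.node hL hR hLp hRp
        constructor
        · rw [Lout_node]
          refine lmax_eq ?_ ?_
          · have : Rout (add (node L R) (int n)) = Rout (node L R) + n := Rout_add_int hWwt n
            rw [← this]
            simp
          · intro x hx
            simp only [List.map_append, List.map_cons, List.map_nil, List.mem_append,
              List.mem_cons, List.map_map] at hx
            rcases hx with hx | hx
            · rcases List.mem_map.mp hx with ⟨g, hg, rfl⟩
              have hgwt := hLp g hg
              have hgB := hBL g hg
              have := (ih g (sizeOf_lt_of_mem_lopts (G := node L R) (by simpa [lopts])) hgwt hgB hMn).2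
              show Rout (add g (sig n)) ≤ _
              rw [this]
              have h1 := (out_bnd hgwt hgB).1.2
              have h2 := hbd.2.1
              omega
            · rcases hx with hx | hx
              · rw [hx, Rout_add_int hWwt n]
              · simp at hx
        · rw [Rout_node]
          refine lmin_eq ?_ ?_
          · have : Lout (add (node L R) (int (-n))) = Lout (node L R) + (-n) := Lout_add_int hWwt (-n)
            rw [show Lout (node L R) - n = Lout (node L R) + (-n) by ring, ← this]
            simp
          · intro x hx
            simp only [List.map_append, List.map_cons, List.map_nil, List.mem_append,
              List.mem_cons, List.map_map] at hx
            rcases hx with hx | hx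
            · rcases List.mem_map.mp hx with ⟨g, hg, rfl⟩
              have hgwt := hRp g hg
              have hgB := hBR g hg
              have := (ih g (sizeOf_lt_of_mem_ropts (G := node L R) (by simpa [ropts])) hgwt hgB hMn).1
              show _ ≤ Lout (add g (sig n))
              rw [this]
              have h1 := (out_bnd hgwt hgB).2.1
              have h2 := hbd.1.2
              omega
            · rcases hx with hx | hx
              · rw [hx, Lout_add_int hWwt (-n)]; omega
              · simp at hx

/-! ### the structural dominance relation -/

/-- `Dm b G H`: structural dominance of class `b` (`true` handles Left-outcomes in
even contexts / Right-outcomes in odd contexts; `false` the other two). -/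
def Dm (b : Bool) (G H : WT) : Prop :=
  (cond b (Lout H ≤ Lout G) (Rout H ≤ Rout G)) ∧
  (∀ h ∈ H.lopts, (∃ g : {x // x ∈ G.lopts}, Dm (!b) g.1 h) ∨
      ∃ h' : {x // x ∈ h.ropts}, Dm b G h'.1) ∧
  (∀ g' ∈ G.ropts, (∃ h'' : {x // x ∈ H.ropts}, Dm (!b) g' h''.1) ∨
      ∃ g'' : {x // x ∈ g'.lopts}, Dm b g''.1 H)
termination_by sizeOf G + sizeOf H
decreasing_by
  · have h1 := sizeOf_lt_of_mem_lopts g.2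
    have h2 := sizeOf_lt_of_mem_lopts ‹_ ∈ H.lopts›
    omega
  · have h1 := sizeOf_lt_of_mem_lopts ‹_ ∈ H.lopts›
    have h2 := sizeOf_lt_of_mem_ropts h'.2
    omega
  · have h1 := sizeOf_lt_of_mem_ropts ‹_ ∈ G.ropts›
    have h2 := sizeOf_lt_of_mem_ropts h''.2
    omega
  · have h1 := sizeOf_lt_of_mem_ropts ‹_ ∈ G.ropts›
    have h2 := sizeOf_lt_of_mem_lopts g''.2
    omega

theorem dm_iff (b : Bool) (G H : WT) : Dm b G H ↔
    (cond b (Lout H ≤ Lout G) (Rout H ≤ Rout G)) ∧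
    (∀ h ∈ H.lopts, (∃ g ∈ G.lopts, Dm (!b) g h) ∨ ∃ h' ∈ h.ropts, Dm b G h') ∧
    (∀ g' ∈ G.ropts, (∃ h'' ∈ H.ropts, Dm (!b) g' h'') ∨ ∃ g'' ∈ g'.lopts, Dm b g'' H) := by
  rw [Dm]
  constructor
  · rintro ⟨h1, h2, h3⟩
    refine ⟨h1, ?_, ?_⟩
    · intro h hh
      rcases h2 h hh with ⟨⟨g, hg⟩, hd⟩ | ⟨⟨h', hh'⟩, hd⟩
      · exact Or.inl ⟨g, hg, hd⟩
      · exact Or.inr ⟨h', hh', hd⟩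
    · intro g' hg'
      rcases h3 g' hg' with ⟨⟨h'', hh''⟩, hd⟩ | ⟨⟨g'', hg''⟩, hd⟩
      · exact Or.inl ⟨h'', hh'', hd⟩
      · exact Or.inr ⟨g'', hg'', hd⟩
  · rintro ⟨h1, h2, h3⟩
    refine ⟨h1, ?_, ?_⟩
    · intro h hh
      rcases h2 h hh with ⟨g, hg, hd⟩ | ⟨h', hh', hd⟩
      · exact Or.inl ⟨⟨g, hg⟩, hd⟩
      · exact Or.inr ⟨⟨h', hh'⟩, hd⟩
    · intro g' hg'
      rcases h3 g' hg' with ⟨h'', hh'', hd⟩ | ⟨g'', hg'', hd⟩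
      · exact Or.inl ⟨⟨h'', hh''⟩, hd⟩
      · exact Or.inr ⟨⟨g'', hg''⟩, hd⟩

theorem Dm.base {b : Bool} {G H : WT} (h : Dm b G H) :
    cond b (Lout H ≤ Lout G) (Rout H ≤ Rout G) := ((dm_iff b G H).mp h).1

theorem Dm.cL {b : Bool} {G H : WT} (h : Dm b G H) :
    ∀ h' ∈ H.lopts, (∃ g ∈ G.lopts, Dm (!b) g h') ∨ ∃ h'' ∈ h'.ropts, Dm b G h'' := ((dm_iff b G H).mp h).2.1

theorem Dm.cR {b : Bool} {G H : WT} (h : Dm b G H) :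
    ∀ g' ∈ G.ropts, (∃ h'' ∈ H.ropts, Dm (!b) g' h'') ∨ ∃ g'' ∈ g'.lopts, Dm b g'' H := ((dm_iff b G H).mp h).2.2

theorem Dm.mk {b : Bool} {G H : WT}
    (h1 : cond b (Lout H ≤ Lout G) (Rout H ≤ Rout G))
    (h2 : ∀ h ∈ H.lopts, (∃ g ∈ G.lopts, Dm (!b) g h) ∨ ∃ h' ∈ h.ropts, Dm b G h')
    (h3 : ∀ g' ∈ G.ropts, (∃ h'' ∈ H.ropts, Dm (!b) g' h'') ∨ ∃ g'' ∈ g'.lopts, Dm b g'' H) :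
    Dm b G H := (dm_iff b G H).mpr ⟨h1, h2, h3⟩

/-- From `Dm b G (int n)` (`G` well-tempered), both outcomes of `G` are at least `n`
(the Lout part needs `b = true`). -/
theorem dm_int_right : ∀ {G : WT} {p b : Bool} {n : ℤ}, IsWT G p → Dm b G (int n) →
    (b = true → n ≤ Lout G) ∧ n ≤ Rout G := by
  intro G
  induction G using indSize with
  | h G ih =>
    intro p b n hG hD
    have hbase := hD.base
    have hL : b = true → n ≤ Lout G := by
      rintro rfl
      simpa [Lout_int] using hbase
    refine ⟨hL, ?_⟩
    cases hG with
    | int m =>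
      cases b with
      | false => simpa [Rout_int] using hbase
      | true => simpa [Lout_int, Rout_int] using hL rfl
    | @node L R p' hLne hRne hLp hRp =>
      rw [Rout_node]
      refine le_lmin (by simpa using hRne) ?_
      intro x hx
      rcases List.mem_map.mp hx with ⟨g', hg', rfl⟩
      rcases hD.cR g' (by simpa [ropts]) with ⟨h'', hh'', _⟩ | ⟨g'', hg'', hD''⟩
      · simp [ropts] at hh''
      · have hg'wt := hRp g' hg'
        have hg''wt := wt_mem_lopts hg'wt hg''
        have hn : n ≤ Rout g'' := (ih g''
          (lt_trans (sizeOf_lt_of_mem_lopts hg'')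
            (sizeOf_lt_of_mem_ropts (G := node L R) (by simpa [ropts]))) hg''wt hD'').2
        have : Rout g'' ≤ Lout g' := by
          cases g' with
          | int m => simp [lopts] at hg''
          | node L' R' =>
            rw [Lout_node]
            exact le_lmax (List.mem_map.mpr ⟨g'', by simpa [lopts] using hg'', rfl⟩)
        omega

/-- Mirror: from `Dm b (int m) H` (`H` well-tempered), both outcomes of `H` are at most `m`
(the Rout part needs `b = false`). -/
theorem dm_int_left : ∀ {H : WT} {p b : Bool} {m : ℤ}, IsWT H p → Dm b (int m) H →
    (b = false → Rout H ≤ m) ∧ Lout H ≤ m := by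
  intro H
  induction H using indSize with
  | h H ih =>
    intro p b m hH hD
    have hbase := hD.base
    have hR : b = false → Rout H ≤ m := by
      rintro rfl
      simpa [Rout_int] using hbase
    refine ⟨hR, ?_⟩
    cases hH with
    | int v =>
      cases b with
      | false => simpa [Lout_int, Rout_int] using hR rfl
      | true => simpa [Lout_int] using hbase
    | @node L R p' hLne hRne hLp hRp =>
      rw [Lout_node]
      refine lmax_le (by simpa using hLne) ?_
      intro x hx
      rcases List.mem_map.mp hx with ⟨h, hh, rfl⟩
      rcases hD.cL h (by simpa [lopts]) with ⟨g, hg, _⟩ | ⟨h', hh', hD'⟩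
      · simp [lopts] at hg
      · have hhwt := hLp h hh
        have hh'wt := wt_mem_ropts hhwt hh'
        have hm : Lout h' ≤ m := (ih h'
          (lt_trans (sizeOf_lt_of_mem_ropts hh')
            (sizeOf_lt_of_mem_lopts (G := node L R) (by simpa [lopts]))) hh'wt hD').2
        have : Rout h ≤ Lout h' := by
          cases h with
          | int v => simp [ropts] at hh'
          | node L' R' =>
            rw [Rout_node]
            exact lmin_le (List.mem_map.mpr ⟨h', by simpa [ropts] using hh', rfl⟩)
        omega

/-! ### further option/outcome helpers -/

theorem mem_lopts_add_left {G H g : WT} (hg : g ∈ G.lopts) : add g H ∈ (add G H).lopts := by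
  rw [lopts_add]
  exact List.mem_append_left _ (List.mem_map_of_mem hg)

theorem mem_lopts_add_right {G H h : WT} (hh : h ∈ H.lopts) : add G h ∈ (add G H).lopts := by
  rw [lopts_add]
  exact List.mem_append_right _ (List.mem_map_of_mem hh)

theorem mem_ropts_add_left {G H g : WT} (hg : g ∈ G.ropts) : add g H ∈ (add G H).ropts := by
  rw [ropts_add]
  exact List.mem_append_left _ (List.mem_map_of_mem hg)

theorem mem_ropts_add_right {G H h : WT} (hh : h ∈ H.ropts) : add G h ∈ (add G H).ropts := by
  rw [ropts_add]
  exact List.mem_append_right _ (List.mem_map_of_mem hh)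

theorem le_Lout_of_mem {K k : WT} (hk : k ∈ K.lopts) : Rout k ≤ Lout K := by
  cases K with
  | int n => simp [lopts] at hk
  | node L R =>
    rw [Lout_node]
    exact le_lmax (List.mem_map_of_mem (by simpa [lopts] using hk))

theorem Rout_le_of_mem {K k : WT} (hk : k ∈ K.ropts) : Rout K ≤ Lout k := by
  cases K with
  | int n => simp [ropts] at hk
  | node L R =>
    rw [Rout_node]
    exact lmin_le (List.mem_map_of_mem (by simpa [ropts] using hk))

theorem Lout_le_of_opts {K : WT} {a : ℤ} (hne : K.lopts ≠ []) (h : ∀ k ∈ K.lopts, Rout k ≤ a) :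
    Lout K ≤ a := by
  cases K with
  | int n => simp [lopts] at hne
  | node L R =>
    rw [Lout_node]
    refine lmax_le (by simpa [lopts] using hne) ?_
    intro x hx
    rcases List.mem_map.mp hx with ⟨k, hk, rfl⟩
    exact h k (by simpa [lopts] using hk)

theorem le_Rout_of_opts {K : WT} {a : ℤ} (hne : K.ropts ≠ []) (h : ∀ k ∈ K.ropts, a ≤ Lout k) :
    a ≤ Rout K := by
  cases K with
  | int n => simp [ropts] at hne
  | node L R =>
    rw [Rout_node]
    refine le_lmin (by simpa [ropts] using hne) ?_
    intro x hx
    rcases List.mem_map.mp hx with ⟨k, hk, rfl⟩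
    exact h k (by simpa [ropts] using hk)

/-! ### pads -/

theorem pad_L {K : WT} {p : Bool} (hK : IsWT K p) (s : Bool) :
    ∃ T, IsWT T s ∧ 0 ≤ Lout (add K T) := by
  cases s with
  | false =>
    refine ⟨int (-Lout K), IsWT.int _, ?_⟩
    rw [Lout_add_int hK]
    omega
  | true =>
    refine ⟨node [int (-Rout K)] [int (-Rout K)], ?_, ?_⟩
    · have : IsWT (node [int (-Rout K)] [int (-Rout K)]) (!false) :=
        IsWT.node (by simp) (by simp)
          (by intro g hg; simp at hg; subst hg; exact IsWT.int _)
          (by intro g hg; simp at hg; subst hg; exact IsWT.int _)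
      simpa using this
    · have hmem : add K (int (-Rout K)) ∈ (add K (node [int (-Rout K)] [int (-Rout K)])).lopts :=
        mem_lopts_add_right (by simp [lopts])
      have := le_Lout_of_mem hmem
      rw [Rout_add_int hK] at this
      omega

theorem pad_R {K : WT} {p : Bool} (hK : IsWT K p) (s : Bool) :
    ∃ U, IsWT U s ∧ Rout (add K U) ≤ -1 := by
  cases s with
  | false =>
    refine ⟨int (-1 - Rout K), IsWT.int _, ?_⟩
    rw [Rout_add_int hK]
    omega
  | true =>
    refine ⟨node [int (-1 - Lout K)] [int (-1 - Lout K)], ?_, ?_⟩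
    · have : IsWT (node [int (-1 - Lout K)] [int (-1 - Lout K)]) (!false) :=
        IsWT.node (by simp) (by simp)
          (by intro g hg; simp at hg; subst hg; exact IsWT.int _)
          (by intro g hg; simp at hg; subst hg; exact IsWT.int _)
      simpa using this
    · have hmem : add K (int (-1 - Lout K)) ∈ (add K (node [int (-1 - Lout K)] [int (-1 - Lout K)])).ropts :=
        mem_ropts_add_right (by simp [ropts])
      have := Rout_le_of_mem hmem
      rw [Lout_add_int hK] at this
      omega

/-! ### GeHalf, violations -/

/-- One "half" of the contextual relation `Ge`: class `true` is
(Lout, even contexts) together with (Rout, odd contexts). -/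
def GeHalf (b : Bool) (G H : WT) : Prop :=
  ∀ (X : WT) (r : Bool), IsWT X r →
    (r = !b → Lout (add H X) ≤ Lout (add G X)) ∧ (r = b → Rout (add H X) ≤ Rout (add G X))

theorem geHalf_of_ge {G H : WT} (h : Ge G H) (b : Bool) : GeHalf b G H := by
  intro X r hX
  exact ⟨fun _ => (h X ⟨r, hX⟩).1, fun _ => (h X ⟨r, hX⟩).2⟩

theorem viol_of_not_geHalf {b : Bool} {G H : WT} (h : ¬ GeHalf b G H) :
    ∃ (X : WT) (r : Bool), IsWT X r ∧
      ((r = !b ∧ Lout (add G X) < Lout (add H X)) ∨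
       (r = b ∧ Rout (add G X) < Rout (add H X))) := by
  by_contra hc
  push_neg at hc
  apply h
  intro X r hX
  obtain ⟨c1, c2⟩ := hc X r hX
  exact ⟨fun hr => by have := c1 hr; omega, fun hr => by have := c2 hr; omega⟩

/-- Calibration: shift a strict Lout-violation to the normalized form. -/
theorem calibrateL {P Q Y : WT} {p q s : Bool} (hP : IsWT P p) (hQ : IsWT Q q) (hY : IsWT Y s)
    (h : Lout (add P Y) < Lout (add Q Y)) :
    ∃ T, IsWT T s ∧ Lout (add P T) ≤ -1 ∧ 0 ≤ Lout (add Q T) := by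
  refine ⟨add Y (int (-1 - Lout (add P Y))), ?_, ?_, ?_⟩
  · have := wt_add hY (IsWT.int (-1 - Lout (add P Y)))
    simpa using this
  · rw [← add_assoc, Lout_add_int (wt_add hP hY)]
    omega
  · rw [← add_assoc, Lout_add_int (wt_add hQ hY)]
    omega

theorem calibrateR {P Q Y : WT} {p q s : Bool} (hP : IsWT P p) (hQ : IsWT Q q) (hY : IsWT Y s)
    (h : Rout (add P Y) < Rout (add Q Y)) :
    ∃ U, IsWT U s ∧ Rout (add P U) ≤ -1 ∧ 0 ≤ Rout (add Q U) := by
  refine ⟨add Y (int (-1 - Rout (add P Y))), ?_, ?_, ?_⟩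
  · have := wt_add hY (IsWT.int (-1 - Rout (add P Y)))
    simpa using this
  · rw [← add_assoc, Rout_add_int (wt_add hP hY)]
    omega
  · rw [← add_assoc, Rout_add_int (wt_add hQ hY)]
    omega

/-- From a failed half, extract a calibrated Left-type discriminating context of
parity `!b`. -/
theorem viol_getL {b : Bool} {P Q : WT} {p q : Bool} (hP : IsWT P p) (hQ : IsWT Q q)
    (hv : ¬ GeHalf b P Q) :
    ∃ T, IsWT T (!b) ∧ Lout (add P T) ≤ -1 ∧ 0 ≤ Lout (add Q T) := by
  obtain ⟨X, r, hX, hcase⟩ := viol_of_not_geHalf hv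
  rcases hcase with ⟨hr, hlt⟩ | ⟨hr, hlt⟩
  · exact hr ▸ calibrateL hP hQ hX hlt
  · -- convert Rout-violation at parity b into Lout-violation at parity !b
    obtain ⟨M1, hM1, hB1⟩ := bnd_exists (add P X)
    obtain ⟨M2, hM2, hB2⟩ := bnd_exists (add Q X)
    set n := max M1 M2 with hn
    have hPX := wt_add hP hX
    have hQX := wt_add hQ hX
    have e1 := (out_add_sig hPX (bnd_mono (le_max_left M1 M2) hB1) (le_refl n)).1
    have e2 := (out_add_sig hQX (bnd_mono (le_max_right M1 M2) hB2) (le_refl n)).1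
    have hYwt : IsWT (add X (sig n)) (!b) := by
      have := wt_add hX (wt_sig n)
      have hxr : xor r true = !b := by rw [hr]; cases b <;> rfl
      rwa [hxr] at this
    have hlt' : Lout (add P (add X (sig n))) < Lout (add Q (add X (sig n))) := by
      rw [← add_assoc, ← add_assoc, e1, e2]
      omega
    exact calibrateL hP hQ hYwt hlt'

/-- From a failed half, extract a calibrated Right-type discriminating context of
parity `b`. -/
theorem viol_getR {b : Bool} {P Q : WT} {p q : Bool} (hP : IsWT P p) (hQ : IsWT Q q)
    (hv : ¬ GeHalf b P Q) :
    ∃ U, IsWT U b ∧ Rout (add P U) ≤ -1 ∧ 0 ≤ Rout (add Q U) := by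
  obtain ⟨X, r, hX, hcase⟩ := viol_of_not_geHalf hv
  rcases hcase with ⟨hr, hlt⟩ | ⟨hr, hlt⟩
  · -- convert Lout-violation at parity !b into Rout-violation at parity b
    obtain ⟨M1, hM1, hB1⟩ := bnd_exists (add P X)
    obtain ⟨M2, hM2, hB2⟩ := bnd_exists (add Q X)
    set n := max M1 M2 with hn
    have hPX := wt_add hP hX
    have hQX := wt_add hQ hX
    have e1 := (out_add_sig hPX (bnd_mono (le_max_left M1 M2) hB1) (le_refl n)).2
    have e2 := (out_add_sig hQX (bnd_mono (le_max_right M1 M2) hB2) (le_refl n)).2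
    have hYwt : IsWT (add X (sig n)) b := by
      have := wt_add hX (wt_sig n)
      have hxr : xor r true = b := by rw [hr]; cases b <;> rfl
      rwa [hxr] at this
    have hlt' : Rout (add P (add X (sig n))) < Rout (add Q (add X (sig n))) := by
      rw [← add_assoc, ← add_assoc, e1, e2]
      omega
    exact calibrateR hP hQ hYwt hlt'
  · exact hr ▸ calibrateR hP hQ hX hlt

/-! ### completeness: contextual dominance implies structural dominance -/

theorem dm_of_geHalf : ∀ (G H : WT), ∀ {p q b : Bool}, IsWT G p → IsWT H q →
    GeHalf b G H → Dm b G H := by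
  intro G H
  induction G, H using indSize2 with
  | h G H ih =>
    intro p q b hG hH hGe
    refine Dm.mk ?_ ?_ ?_
    · -- base outcome condition, from the context X = int 0
      have h0 := hGe (int 0) false (IsWT.int 0)
      cases b with
      | true =>
        have := h0.1 rfl
        rw [Lout_add_int hH 0, Lout_add_int hG 0] at this
        simpa using this
      | false =>
        have := h0.2 rfl
        rw [Rout_add_int hH 0, Rout_add_int hG 0] at this
        simpa using this
    · -- Left-option clause
      intro h hh
      by_contra hcon
      push_neg at hcon
      obtain ⟨hcg, hch⟩ := hcon
      have hhwt : IsWT h (!q) := wt_mem_lopts hH hh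
      have hszh : sizeOf h < sizeOf H := sizeOf_lt_of_mem_lopts hh
      have hT : ∀ g ∈ G.lopts, ∃ T, IsWT T b ∧ Lout (add g T) ≤ -1 ∧ 0 ≤ Lout (add h T) := by
        intro g hg
        have hgwt := wt_mem_lopts hG hg
        have hszg : sizeOf g < sizeOf G := sizeOf_lt_of_mem_lopts hg
        have hnGe : ¬ GeHalf (!b) g h :=
          fun hge => hcg g hg (ih g h (by omega) hgwt hhwt hge)
        have := viol_getL hgwt hhwt hnGe
        simpa using this
      have hU : ∀ h' ∈ h.ropts, ∃ U, IsWT U b ∧ Rout (add G U) ≤ -1 ∧ 0 ≤ Rout (add h' U) := by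
        intro h' hh'
        have hh'wt := wt_mem_ropts hhwt hh'
        have hszh' : sizeOf h' < sizeOf h := sizeOf_lt_of_mem_ropts hh'
        have hnGe : ¬ GeHalf b G h' :=
          fun hge => hch h' hh' (ih G h' (by omega) hG hh'wt hge)
        exact viol_getR hG hh'wt hnGe
      choose! T hTwt hTg hTh using hT
      choose! U hUwt hUG hUh using hU
      obtain ⟨T0, hT0wt, hT0⟩ := pad_L hhwt b
      obtain ⟨U0, hU0wt, hU0⟩ := pad_R hG b
      set X := node ((h.ropts.map U) ++ [U0]) ((G.lopts.map T) ++ [T0]) with hXdef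
      have hXl : X.lopts = (h.ropts.map U) ++ [U0] := rfl
      have hXr : X.ropts = (G.lopts.map T) ++ [T0] := rfl
      have hXwt : IsWT X (!b) := by
        refine IsWT.node (by simp) (by simp) ?_ ?_
        · intro k hk
          rcases List.mem_append.mp hk with hk | hk
          · rcases List.mem_map.mp hk with ⟨h', hh', rfl⟩
            exact hUwt h' hh'
          · rw [List.mem_singleton.mp hk]; exact hU0wt
        · intro k hk
          rcases List.mem_append.mp hk with hk | hk
          · rcases List.mem_map.mp hk with ⟨g, hg, rfl⟩
            exact hTwt g hg
          · rw [List.mem_singleton.mp hk]; exact hT0wt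
      have hcomp := (hGe X (!b) hXwt).1 rfl
      -- Lout (add H X) ≥ 0
      have hHX : 0 ≤ Lout (add H X) := by
        have hm : add h X ∈ (add H X).lopts := mem_lopts_add_left hh
        refine le_trans ?_ (le_Lout_of_mem hm)
        refine le_Rout_of_opts ?_ ?_
        · rw [ropts_add, hXr]
          simp
        · intro k hk
          rw [ropts_add] at hk
          rcases List.mem_append.mp hk with hk | hk
          · rcases List.mem_map.mp hk with ⟨h', hh', rfl⟩
            have hmem : add h' (U h') ∈ (add h' X).lopts := by
              refine mem_lopts_add_right ?_
              rw [hXl]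
              exact List.mem_append_left _ (List.mem_map_of_mem hh')
            exact le_trans (hUh h' hh') (le_Lout_of_mem hmem)
          · rcases List.mem_map.mp hk with ⟨T', hT', rfl⟩
            rw [hXr] at hT'
            rcases List.mem_append.mp hT' with hT' | hT'
            · rcases List.mem_map.mp hT' with ⟨g, hg, rfl⟩
              exact hTh g hg
            · rw [List.mem_singleton.mp hT']
              exact hT0
      -- Lout (add G X) ≤ -1
      have hGX : Lout (add G X) ≤ -1 := by
        refine Lout_le_of_opts ?_ ?_
        · rw [lopts_add, hXl]
          simp
        · intro k hk
          rw [lopts_add] at hk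
          rcases List.mem_append.mp hk with hk | hk
          · rcases List.mem_map.mp hk with ⟨g, hg, rfl⟩
            have hmem : add g (T g) ∈ (add g X).ropts := by
              refine mem_ropts_add_right ?_
              rw [hXr]
              exact List.mem_append_left _ (List.mem_map_of_mem hg)
            exact le_trans (Rout_le_of_mem hmem) (hTg g hg)
          · rcases List.mem_map.mp hk with ⟨U', hU', rfl⟩
            rw [hXl] at hU'
            rcases List.mem_append.mp hU' with hU' | hU'
            · rcases List.mem_map.mp hU' with ⟨h', hh', rfl⟩
              exact hUG h' hh'
            · rw [List.mem_singleton.mp hU']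
              exact hU0
      omega
    · -- Right-option clause
      intro g' hg'
      by_contra hcon
      push_neg at hcon
      obtain ⟨hch, hcg⟩ := hcon
      have hg'wt : IsWT g' (!p) := wt_mem_ropts hG hg'
      have hszg' : sizeOf g' < sizeOf G := sizeOf_lt_of_mem_ropts hg'
      have hT : ∀ g'' ∈ g'.lopts, ∃ T, IsWT T (!b) ∧ Lout (add g'' T) ≤ -1 ∧ 0 ≤ Lout (add H T) := by
        intro g'' hg''
        have hg''wt := wt_mem_lopts hg'wt hg''
        have hszg'' : sizeOf g'' < sizeOf g' := sizeOf_lt_of_mem_lopts hg''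
        have hnGe : ¬ GeHalf b g'' H :=
          fun hge => hcg g'' hg'' (ih g'' H (by omega) hg''wt hH hge)
        exact viol_getL hg''wt hH hnGe
      have hU : ∀ h'' ∈ H.ropts, ∃ U, IsWT U (!b) ∧ Rout (add g' U) ≤ -1 ∧ 0 ≤ Rout (add h'' U) := by
        intro h'' hh''
        have hh''wt := wt_mem_ropts hH hh''
        have hszh'' : sizeOf h'' < sizeOf H := sizeOf_lt_of_mem_ropts hh''
        have hnGe : ¬ GeHalf (!b) g' h'' :=
          fun hge => hch h'' hh'' (ih g' h'' (by omega) hg'wt hh''wt hge)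
        have := viol_getR hg'wt hh''wt hnGe
        simpa using this
      choose! T hTwt hTg hTh using hT
      choose! U hUwt hUg hUh using hU
      obtain ⟨T0, hT0wt, hT0⟩ := pad_L hH (!b)
      obtain ⟨U0, hU0wt, hU0⟩ := pad_R hg'wt (!b)
      set X := node ((H.ropts.map U) ++ [U0]) ((g'.lopts.map T) ++ [T0]) with hXdef
      have hXl : X.lopts = (H.ropts.map U) ++ [U0] := rfl
      have hXr : X.ropts = (g'.lopts.map T) ++ [T0] := rfl
      have hXwt : IsWT X b := by
        have : IsWT X (!(!b)) := by
          refine IsWT.node (by simp) (by simp) ?_ ?_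
          · intro k hk
            rcases List.mem_append.mp hk with hk | hk
            · rcases List.mem_map.mp hk with ⟨h'', hh'', rfl⟩
              exact hUwt h'' hh''
            · rw [List.mem_singleton.mp hk]; exact hU0wt
          · intro k hk
            rcases List.mem_append.mp hk with hk | hk
            · rcases List.mem_map.mp hk with ⟨g'', hg'', rfl⟩
              exact hTwt g'' hg''
            · rw [List.mem_singleton.mp hk]; exact hT0wt
        simpa using this
      have hcomp := (hGe X b hXwt).2 rfl
      -- Rout (add H X) ≥ 0
      have hHX : 0 ≤ Rout (add H X) := by
        refine le_Rout_of_opts ?_ ?_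
        · rw [ropts_add, hXr]
          simp
        · intro k hk
          rw [ropts_add] at hk
          rcases List.mem_append.mp hk with hk | hk
          · rcases List.mem_map.mp hk with ⟨h'', hh'', rfl⟩
            have hmem : add h'' (U h'') ∈ (add h'' X).lopts := by
              refine mem_lopts_add_right ?_
              rw [hXl]
              exact List.mem_append_left _ (List.mem_map_of_mem hh'')
            exact le_trans (hUh h'' hh'') (le_Lout_of_mem hmem)
          · rcases List.mem_map.mp hk with ⟨T', hT', rfl⟩
            rw [hXr] at hT'
            rcases List.mem_append.mp hT' with hT' | hT'
            · rcases List.mem_map.mp hT' with ⟨g'', hg'', rfl⟩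
              exact hTh g'' hg''
            · rw [List.mem_singleton.mp hT']
              exact hT0
      -- Rout (add G X) ≤ -1
      have hGX : Rout (add G X) ≤ -1 := by
        have hm : add g' X ∈ (add G X).ropts := mem_ropts_add_left hg'
        refine le_trans (Rout_le_of_mem hm) ?_
        refine Lout_le_of_opts ?_ ?_
        · rw [lopts_add, hXl]
          simp
        · intro k hk
          rw [lopts_add] at hk
          rcases List.mem_append.mp hk with hk | hk
          · rcases List.mem_map.mp hk with ⟨g'', hg'', rfl⟩
            have hmem : add g'' (T g'') ∈ (add g'' X).ropts := by
              refine mem_ropts_add_right ?_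
              rw [hXr]
              exact List.mem_append_left _ (List.mem_map_of_mem hg'')
            exact le_trans (Rout_le_of_mem hmem) (hTg g'' hg'')
          · rcases List.mem_map.mp hk with ⟨U', hU', rfl⟩
            rw [hXl] at hU'
            rcases List.mem_append.mp hU' with hU' | hU'
            · rcases List.mem_map.mp hU' with ⟨h'', hh'', rfl⟩
              exact hUg h'' hh''
            · rw [List.mem_singleton.mp hU']
              exact hU0
      omega

/-! ### the zugzwang gadget and parity rigidity -/

theorem bnd_lopts {M : ℤ} {K k : WT} (h : Bnd M K) (hk : k ∈ K.lopts) : Bnd M k := by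
  cases h with
  | int => simp [lopts] at hk
  | node hL hR => exact hL k (by simpa [lopts] using hk)

theorem bnd_ropts {M : ℤ} {K k : WT} (h : Bnd M K) (hk : k ∈ K.ropts) : Bnd M k := by
  cases h with
  | int => simp [ropts] at hk
  | node hL hR => exact hR k (by simpa [ropts] using hk)

theorem bnd_int {M n : ℤ} (h : Bnd M (int n)) : -M ≤ n ∧ n ≤ M := by
  cases h with
  | int h1 h2 => exact ⟨h1, h2⟩

def Zg (c : ℤ) : WT := node [node [int (-c)] [int (-c)]] [node [int c] [int c]]

theorem wt_Zg (c : ℤ) : IsWT (Zg c) false := by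
  have h1 : IsWT (node [int (-c)] [int (-c)]) (!false) :=
    IsWT.node (by simp) (by simp)
      (by intro g hg; simp at hg; subst hg; exact IsWT.int _)
      (by intro g hg; simp at hg; subst hg; exact IsWT.int _)
  have h2 : IsWT (node [int c] [int c]) (!false) :=
    IsWT.node (by simp) (by simp)
      (by intro g hg; simp at hg; subst hg; exact IsWT.int _)
      (by intro g hg; simp at hg; subst hg; exact IsWT.int _)
  have : IsWT (Zg c) (!true) :=
    IsWT.node (by simp [Zg]) (by simp [Zg])
      (by intro g hg; simp [Zg] at hg; subst hg; exact h1)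
      (by intro g hg; simp [Zg] at hg; subst hg; exact h2)
  simpa using this

theorem out_add_Zg : ∀ {K : WT} {p : Bool} {M c : ℤ}, IsWT K p → Bnd M K → 0 ≤ M → M ≤ c →
    (p = false → Lout (add K (Zg c)) ≤ M - c ∧ c - M ≤ Rout (add K (Zg c))) ∧
    (p = true → c - M ≤ Lout (add K (Zg c)) ∧ Rout (add K (Zg c)) ≤ M - c) := by
  intro K
  induction K using indSize with
  | h K ih =>
    intro p M c hK hB hM hMc
    have hbd := out_bnd hK hB
    have hZA : (Zg c).lopts = [node [int (-c)] [int (-c)]] := rfl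
    have hZB : (Zg c).ropts = [node [int c] [int c]] := rfl
    -- the "forced" options
    have hKA : add K (node [int (-c)] [int (-c)]) ∈ (add K (Zg c)).lopts :=
      mem_lopts_add_right (by rw [hZA]; simp)
    have hKB : add K (node [int c] [int c]) ∈ (add K (Zg c)).ropts :=
      mem_ropts_add_right (by rw [hZB]; simp)
    have hRKA : Rout (add K (node [int (-c)] [int (-c)])) ≤ Lout K - c := by
      have hm : add K (int (-c)) ∈ (add K (node [int (-c)] [int (-c)])).ropts :=
        mem_ropts_add_right (by simp [ropts])
      have := Rout_le_of_mem hm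
      rw [Lout_add_int hK] at this
      omega
    have hLKB : Rout K + c ≤ Lout (add K (node [int c] [int c])) := by
      have hm : add K (int c) ∈ (add K (node [int c] [int c])).lopts :=
        mem_lopts_add_right (by simp [lopts])
      have := le_Lout_of_mem hm
      rwa [Rout_add_int hK] at this
    cases hK with
    | int n =>
      have hn := bnd_int hB
      refine ⟨fun _ => ⟨?_, ?_⟩, fun h => by simp at h⟩
      · refine Lout_le_of_opts ?_ ?_
        · rw [lopts_add, hZA]; simp [lopts]
        · intro k hk
          rw [lopts_add] at hk
          rcases List.mem_append.mp hk with hk | hk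
          · simp [lopts] at hk
          · rw [hZA] at hk
            rcases List.mem_map.mp hk with ⟨z, hz, rfl⟩
            rw [List.mem_singleton.mp hz]
            rw [Lout_int] at hRKA
            omega
      · refine le_Rout_of_opts ?_ ?_
        · rw [ropts_add, hZB]; simp [ropts]
        · intro k hk
          rw [ropts_add] at hk
          rcases List.mem_append.mp hk with hk | hk
          · simp [ropts] at hk
          · rw [hZB] at hk
            rcases List.mem_map.mp hk with ⟨z, hz, rfl⟩
            rw [List.mem_singleton.mp hz]
            rw [Rout_int] at hLKB
            omega
    | @node L R p' hLne hRne hLp hRp =>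
      have hKwt : IsWT (node L R) (!p') := IsWT.node hLne hRne hLp hRp
      have ihg : ∀ g ∈ L ++ R, sizeOf g < sizeOf (node L R) := by
        intro g hg
        rcases List.mem_append.mp hg with hg | hg
        · exact sizeOf_lt_of_mem_lopts (G := node L R) (by simpa [lopts])
        · exact sizeOf_lt_of_mem_ropts (G := node L R) (by simpa [ropts])
      cases p' with
      | true =>
        -- K is even-tempered
        refine ⟨fun _ => ⟨?_, ?_⟩, fun hcon => by simp at hcon⟩
        · refine Lout_le_of_opts ?_ ?_
          · rw [lopts_add, hZA]; simp
          · intro k hk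
            rw [lopts_add] at hk
            rcases List.mem_append.mp hk with hk | hk
            · rcases List.mem_map.mp hk with ⟨g, hg, rfl⟩
              have hgwt := wt_mem_lopts hKwt hg
              have hgB := bnd_lopts hB hg
              simp only [Bool.not_not] at hgwt
              exact ((ih g (ihg g (List.mem_append_left _ (by simpa [lopts] using hg)))
                hgwt hgB hM hMc).2 rfl).2
            · rw [hZA] at hk
              rcases List.mem_map.mp hk with ⟨z, hz, rfl⟩
              rw [List.mem_singleton.mp hz]
              have h2 := hbd.1.2
              omega
        · refine le_Rout_of_opts ?_ ?_
          · rw [ropts_add, hZB]; simp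
          · intro k hk
            rw [ropts_add] at hk
            rcases List.mem_append.mp hk with hk | hk
            · rcases List.mem_map.mp hk with ⟨g, hg, rfl⟩
              have hgwt := wt_mem_ropts hKwt hg
              have hgB := bnd_ropts hB hg
              simp only [Bool.not_not] at hgwt
              exact ((ih g (ihg g (List.mem_append_right _ (by simpa [ropts] using hg)))
                hgwt hgB hM hMc).2 rfl).1
            · rw [hZB] at hk
              rcases List.mem_map.mp hk with ⟨z, hz, rfl⟩
              rw [List.mem_singleton.mp hz]
              have h2 := hbd.2.1
              omega
      | false =>
        -- K is odd-tempered
        refine ⟨fun hcon => by simp at hcon, fun _ => ⟨?_, ?_⟩⟩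
        · obtain ⟨g, hg⟩ := List.exists_mem_of_ne_nil L hLne
          have hgwt := hLp g hg
          have hgB := bnd_lopts hB (by simpa [lopts] using hg)
          have h1 := ((ih g (ihg g (List.mem_append_left _ hg)) hgwt hgB hM hMc).1 rfl).2
          refine le_trans h1 (le_Lout_of_mem (mem_lopts_add_left (by simpa [lopts] using hg)))
        · obtain ⟨g, hg⟩ := List.exists_mem_of_ne_nil R hRne
          have hgwt := hRp g hg
          have hgB := bnd_ropts hB (by simpa [ropts] using hg)
          have h1 := ((ih g (ihg g (List.mem_append_right _ hg)) hgwt hgB hM hMc).1 rfl).1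
          refine le_trans (Rout_le_of_mem (mem_ropts_add_left (by simpa [ropts] using hg))) h1

/-- `Ge` forces equal parity. -/
theorem par_eq_of_ge {G H : WT} {p q : Bool} (hG : IsWT G p) (hH : IsWT H q) (hGe : Ge G H) :
    p = q := by
  by_contra hpq
  obtain ⟨M1, hM1, hB1⟩ := bnd_exists G
  obtain ⟨M2, hM2, hB2⟩ := bnd_exists H
  set M := max M1 M2 with hM
  have hM0 : 0 ≤ M := le_max_of_le_left hM1
  set c := 2 * M + 1 with hc
  have hMc : M ≤ c := by omega
  have hBG : Bnd M G := bnd_mono (le_max_left _ _) hB1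
  have hBH : Bnd M H := bnd_mono (le_max_right _ _) hB2
  have hZG := out_add_Zg hG hBG hM0 hMc
  have hZH := out_add_Zg hH hBH hM0 hMc
  have hcomp := hGe (Zg c) ⟨false, wt_Zg c⟩
  cases p with
  | false =>
    have hq : q = true := by cases q <;> simp_all
    have h1 := (hZG.1 rfl).1
    have h2 := (hZH.2 hq).1
    have := hcomp.1
    omega
  | true =>
    have hq : q = false := by cases q <;> simp_all
    have h1 := (hZG.2 rfl).2
    have h2 := (hZH.1 hq).2
    have := hcomp.2
    omega

/-! ### helpers for fext2 -/

theorem valued_int {S : Set ℤ} {n : ℤ} (h : Valued S (int n)) : n ∈ S := by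
  cases h; assumption

theorem valued_lopts {S : Set ℤ} {K k : WT} (h : Valued S K) (hk : k ∈ K.lopts) : Valued S k := by
  cases h with
  | int => simp [lopts] at hk
  | node hL hR => exact hL k (by simpa [lopts] using hk)

theorem valued_ropts {S : Set ℤ} {K k : WT} (h : Valued S K) (hk : k ∈ K.ropts) : Valued S k := by
  cases h with
  | int => simp [ropts] at hk
  | node hL hR => exact hR k (by simpa [ropts] using hk)

theorem not_both_int_left {G H g : WT} (hg : g ∈ G.lopts ∨ g ∈ G.ropts) :
    ¬(∃ m n, G = int m ∧ H = int n) := by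
  rintro ⟨m, n, rfl, rfl⟩
  rcases hg with hg | hg <;> simp [lopts, ropts] at hg

theorem not_both_int_right {G H h : WT} (hh : h ∈ H.lopts ∨ h ∈ H.ropts) :
    ¬(∃ m n, G = int m ∧ H = int n) := by
  rintro ⟨m, n, rfl, rfl⟩
  rcases hh with hh | hh <;> simp [lopts, ropts] at hh

theorem mem_lopts_fext2_left (f : ℤ → ℤ → ℤ) {G H g : WT} (hg : g ∈ G.lopts) :
    fext2 f g H ∈ (fext2 f G H).lopts := by
  rw [lopts_fext2 f G H (not_both_int_left (Or.inl hg))]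
  exact List.mem_append_left _ (List.mem_map_of_mem hg)

theorem mem_lopts_fext2_right (f : ℤ → ℤ → ℤ) {G H h : WT} (hh : h ∈ H.lopts) :
    fext2 f G h ∈ (fext2 f G H).lopts := by
  rw [lopts_fext2 f G H (not_both_int_right (Or.inl hh))]
  exact List.mem_append_right _ (List.mem_map_of_mem hh)

theorem mem_ropts_fext2_left (f : ℤ → ℤ → ℤ) {G H g : WT} (hg : g ∈ G.ropts) :
    fext2 f g H ∈ (fext2 f G H).ropts := by
  rw [ropts_fext2 f G H (not_both_int_left (Or.inr hg))]
  exact List.mem_append_left _ (List.mem_map_of_mem hg)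

theorem mem_ropts_fext2_right (f : ℤ → ℤ → ℤ) {G H h : WT} (hh : h ∈ H.ropts) :
    fext2 f G h ∈ (fext2 f G H).ropts := by
  rw [ropts_fext2 f G H (not_both_int_right (Or.inr hh))]
  exact List.mem_append_right _ (List.mem_map_of_mem hh)

theorem lopts_fext2_ne_nil (f : ℤ → ℤ → ℤ) {G H : WT} {p q : Bool}
    (hG : IsWT G p) (hH : IsWT H q) (hni : ¬(∃ m n, G = int m ∧ H = int n)) :
    (fext2 f G H).lopts ≠ [] := by
  rw [lopts_fext2 f G H hni]
  cases G with
  | int m =>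
    cases H with
    | int n => exact absurd ⟨m, n, rfl, rfl⟩ hni
    | node L R => have := wt_lopts_ne_nil hH; simp [lopts]; intro h; exact absurd h this
  | node L R => have := wt_lopts_ne_nil hG; simp [lopts]; intro h; exact absurd h this

theorem ropts_fext2_ne_nil (f : ℤ → ℤ → ℤ) {G H : WT} {p q : Bool}
    (hG : IsWT G p) (hH : IsWT H q) (hni : ¬(∃ m n, G = int m ∧ H = int n)) :
    (fext2 f G H).ropts ≠ [] := by
  rw [ropts_fext2 f G H hni]
  cases G with
  | int m =>
    cases H with
    | int n => exact absurd ⟨m, n, rfl, rfl⟩ hni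
    | node L R => have := wt_ropts_ne_nil hH; simp [ropts]; intro h; exact absurd h this
  | node L R => have := wt_ropts_ne_nil hG; simp [ropts]; intro h; exact absurd h this

theorem exists_lopt_ge {K : WT} {a : ℤ} (hne : K.lopts ≠ []) (h : a ≤ Lout K) :
    ∃ g ∈ K.lopts, a ≤ Rout g := by
  cases K with
  | int n => simp [lopts] at hne
  | node L R =>
    rw [Lout_node] at h
    have hm := lmax_mem (l := L.map Rout) (by simpa [lopts] using hne)
    rcases List.mem_map.mp hm with ⟨g, hg, he⟩
    exact ⟨g, by simpa [lopts] using hg, by omega⟩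

theorem exists_ropt_le {K : WT} {a : ℤ} (hne : K.ropts ≠ []) (h : Rout K ≤ a) :
    ∃ g ∈ K.ropts, Lout g ≤ a := by
  cases K with
  | int n => simp [ropts] at hne
  | node L R =>
    rw [Rout_node] at h
    have hm := lmin_mem (l := R.map Lout) (by simpa [ropts] using hne)
    rcases List.mem_map.mp hm with ⟨g, hg, he⟩
    exact ⟨g, by simpa [ropts] using hg, by omega⟩

/-! ### joint threshold lemmas for fext2: lower bounds -/

theorem not_both_int_node_right {G : WT} {L R : List WT} :
    ¬(∃ m n, G = int m ∧ node L R = int n) := by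
  rintro ⟨m, n, -, h⟩
  exact WT.noConfusion h

theorem not_both_int_node_left {H : WT} {L R : List WT} :
    ¬(∃ m n, node L R = int m ∧ H = int n) := by
  rintro ⟨m, n, h, -⟩
  exact WT.noConfusion h

section suites

variable {S₁ S₂ : Set ℤ} {f : ℤ → ℤ → ℤ}
variable (hf : ∀ x x' y y', x ∈ S₁ → x' ∈ S₁ → y ∈ S₂ → y' ∈ S₂ → x ≤ x' → y ≤ y' →
      f x y ≤ f x' y')

include hf in
theorem psuite : ∀ (N : ℕ) (K₁ K₂ : WT), sizeOf K₁ + sizeOf K₂ ≤ N →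
    ∀ {p₁ p₂ : Bool}, IsWT K₁ p₁ → IsWT K₂ p₂ → Valued S₁ K₁ → Valued S₂ K₂ →
    ∀ {n₁ n₂ : ℤ}, n₁ ∈ S₁ → n₂ ∈ S₂ →
    ((n₁ ≤ Rout K₁ → Dm true K₂ (int n₂) → f n₁ n₂ ≤ Rout (fext2 f K₁ K₂)) ∧
     (n₁ ≤ Lout K₁ → Dm true K₂ (int n₂) → f n₁ n₂ ≤ Lout (fext2 f K₁ K₂)) ∧
     (Dm true K₁ (int n₁) → n₂ ≤ Rout K₂ → f n₁ n₂ ≤ Rout (fext2 f K₁ K₂)) ∧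
     (Dm true K₁ (int n₁) → n₂ ≤ Lout K₂ → f n₁ n₂ ≤ Lout (fext2 f K₁ K₂)) ∧
     (∀ v₁, K₁ = int v₁ → n₁ ≤ v₁ → n₂ ≤ Rout K₂ → f n₁ n₂ ≤ Rout (fext2 f K₁ K₂)) ∧
     (∀ v₁, K₁ = int v₁ → n₁ ≤ v₁ → n₂ ≤ Lout K₂ → f n₁ n₂ ≤ Lout (fext2 f K₁ K₂)) ∧
     (∀ v₂, K₂ = int v₂ → n₂ ≤ v₂ → n₁ ≤ Rout K₁ → f n₁ n₂ ≤ Rout (fext2 f K₁ K₂)) ∧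
     (∀ v₂, K₂ = int v₂ → n₂ ≤ v₂ → n₁ ≤ Lout K₁ → f n₁ n₂ ≤ Lout (fext2 f K₁ K₂))) := by
  intro N
  induction N with
  | zero =>
    intro K₁ K₂ hsz
    exfalso
    cases K₁ <;> simp at hsz
  | succ N ihN =>
    intro K₁ K₂ hsz p₁ p₂ h₁ h₂ hv₁ hv₂ n₁ n₂ hn₁ hn₂
    have base : ∀ v₁ v₂, n₁ ≤ v₁ → n₂ ≤ v₂ → v₁ ∈ S₁ → v₂ ∈ S₂ →
        f n₁ n₂ ≤ f v₁ v₂ := fun v₁ v₂ hle₁ hle₂ hm₁ hm₂ =>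
      hf n₁ v₁ n₂ v₂ hn₁ hm₁ hn₂ hm₂ hle₁ hle₂
    have hszl : ∀ {k : WT}, k ∈ K₁.lopts ∨ k ∈ K₁.ropts → sizeOf k + sizeOf K₂ ≤ N := by
      rintro k (hk | hk)
      · have := sizeOf_lt_of_mem_lopts hk; omega
      · have := sizeOf_lt_of_mem_ropts hk; omega
    have hszr : ∀ {k : WT}, k ∈ K₂.lopts ∨ k ∈ K₂.ropts → sizeOf K₁ + sizeOf k ≤ N := by
      rintro k (hk | hk)
      · have := sizeOf_lt_of_mem_lopts hk; omega
      · have := sizeOf_lt_of_mem_ropts hk; omega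
    have hszrr : ∀ {k k' : WT}, k ∈ K₂.ropts → k' ∈ k.lopts → sizeOf K₁ + sizeOf k' ≤ N := by
      intro k k' hk hk'
      have h1 := sizeOf_lt_of_mem_ropts hk
      have h2 := sizeOf_lt_of_mem_lopts hk'
      omega
    have hszll : ∀ {k k' : WT}, k ∈ K₁.ropts → k' ∈ k.lopts → sizeOf k' + sizeOf K₂ ≤ N := by
      intro k k' hk hk'
      have h1 := sizeOf_lt_of_mem_ropts hk
      have h2 := sizeOf_lt_of_mem_lopts hk'
      omega
    refine ⟨?_, ?_, ?_, ?_, ?_, ?_, ?_, ?_⟩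
    · -- p2
      intro hR₁ hd₂
      by_cases hni : ∃ m n, K₁ = int m ∧ K₂ = int n
      · obtain ⟨v₁, v₂, rfl, rfl⟩ := hni
        rw [Rout_int] at hR₁
        rw [fext2_int_int, Rout_int]
        have hle₂ := (dm_int_right h₂ hd₂).2
        rw [Rout_int] at hle₂
        exact base v₁ v₂ hR₁ hle₂ (valued_int hv₁) (valued_int hv₂)
      · refine le_Rout_of_opts (ropts_fext2_ne_nil f h₁ h₂ hni) ?_
        intro k hk
        rw [ropts_fext2 f _ _ hni] at hk
        rcases List.mem_append.mp hk with hk | hk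
        · rcases List.mem_map.mp hk with ⟨k₁', hk₁', rfl⟩
          exact (ihN k₁' K₂ (hszl (Or.inr hk₁')) (wt_mem_ropts h₁ hk₁') h₂
            (valued_ropts hv₁ hk₁') hv₂ hn₁ hn₂).2.1
            (le_trans hR₁ (Rout_le_of_mem hk₁')) hd₂
        · rcases List.mem_map.mp hk with ⟨k₂', hk₂', rfl⟩
          rcases hd₂.cR k₂' hk₂' with ⟨h'', hmem, -⟩ | ⟨k₂'', hk₂'', hd₂''⟩
          · simp [ropts] at hmem
          · have hrec := (ihN K₁ k₂'' (hszrr hk₂' hk₂'') h₁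
              (wt_mem_lopts (wt_mem_ropts h₂ hk₂') hk₂'') hv₁
              (valued_lopts (valued_ropts hv₂ hk₂') hk₂'') hn₁ hn₂).1 hR₁ hd₂''
            exact le_trans hrec (le_Lout_of_mem (mem_lopts_fext2_right f hk₂''))
    · -- p3
      intro hL₁ hd₂
      cases h₁ with
      | int v₁ =>
        rw [Lout_int] at hL₁
        cases h₂ with
        | int v₂ =>
          have hle₂ := (dm_int_right (IsWT.int v₂) hd₂).1 rfl
          rw [Lout_int] at hle₂
          rw [fext2_int_int, Lout_int]
          exact base v₁ v₂ hL₁ hle₂ (valued_int hv₁) (valued_int hv₂)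
        | @node L₂ R₂ q' hLne hRne hLp hRp =>
          have h₂' : IsWT (node L₂ R₂) (!q') := IsWT.node hLne hRne hLp hRp
          have hn₂L := (dm_int_right h₂' hd₂).1 rfl
          obtain ⟨g₂, hg₂, hRg₂⟩ := exists_lopt_ge (by simpa [lopts] using hLne) hn₂L
          have hrec := (ihN (int v₁) g₂ (hszr (Or.inl hg₂)) (IsWT.int v₁)
            (wt_mem_lopts h₂' hg₂) hv₁ (valued_lopts hv₂ hg₂) hn₁ hn₂).2.2.2.2.1
            v₁ rfl hL₁ hRg₂
          exact le_trans hrec (le_Lout_of_mem (mem_lopts_fext2_right f hg₂))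
      | @node L₁ R₁ q' hLne hRne hLp hRp =>
        have h₁' : IsWT (node L₁ R₁) (!q') := IsWT.node hLne hRne hLp hRp
        obtain ⟨g₁, hg₁, hRg₁⟩ := exists_lopt_ge (by simpa [lopts] using hLne) hL₁
        have hrec := (ihN g₁ K₂ (hszl (Or.inl hg₁)) (wt_mem_lopts h₁' hg₁) h₂
          (valued_lopts hv₁ hg₁) hv₂ hn₁ hn₂).1 hRg₁ hd₂
        exact le_trans hrec (le_Lout_of_mem (mem_lopts_fext2_left f hg₁))
    · -- p2'
      intro hd₁ hR₂
      by_cases hni : ∃ m n, K₁ = int m ∧ K₂ = int n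
      · obtain ⟨v₁, v₂, rfl, rfl⟩ := hni
        rw [Rout_int] at hR₂
        rw [fext2_int_int, Rout_int]
        have hle₁ := (dm_int_right h₁ hd₁).2
        rw [Rout_int] at hle₁
        exact base v₁ v₂ hle₁ hR₂ (valued_int hv₁) (valued_int hv₂)
      · refine le_Rout_of_opts (ropts_fext2_ne_nil f h₁ h₂ hni) ?_
        intro k hk
        rw [ropts_fext2 f _ _ hni] at hk
        rcases List.mem_append.mp hk with hk | hk
        · rcases List.mem_map.mp hk with ⟨k₁', hk₁', rfl⟩
          rcases hd₁.cR k₁' hk₁' with ⟨h'', hmem, -⟩ | ⟨k₁'', hk₁'', hd₁''⟩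
          · simp [ropts] at hmem
          · have hrec := (ihN k₁'' K₂ (hszll hk₁' hk₁'')
              (wt_mem_lopts (wt_mem_ropts h₁ hk₁') hk₁'') h₂
              (valued_lopts (valued_ropts hv₁ hk₁') hk₁'') hv₂ hn₁ hn₂).2.2.1 hd₁'' hR₂
            exact le_trans hrec (le_Lout_of_mem (mem_lopts_fext2_left f hk₁''))
        · rcases List.mem_map.mp hk with ⟨k₂', hk₂', rfl⟩
          exact (ihN K₁ k₂' (hszr (Or.inr hk₂')) h₁ (wt_mem_ropts h₂ hk₂') hv₁
            (valued_ropts hv₂ hk₂') hn₁ hn₂).2.2.2.1 hd₁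
            (le_trans hR₂ (Rout_le_of_mem hk₂'))
    · -- p3'
      intro hd₁ hL₂
      cases h₂ with
      | int v₂ =>
        rw [Lout_int] at hL₂
        cases h₁ with
        | int v₁ =>
          have hle₁ := (dm_int_right (IsWT.int v₁) hd₁).1 rfl
          rw [Lout_int] at hle₁
          rw [fext2_int_int, Lout_int]
          exact base v₁ v₂ hle₁ hL₂ (valued_int hv₁) (valued_int hv₂)
        | @node L₁ R₁ q' hLne hRne hLp hRp =>
          have h₁' : IsWT (node L₁ R₁) (!q') := IsWT.node hLne hRne hLp hRp
          have hn₁L := (dm_int_right h₁' hd₁).1 rfl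
          obtain ⟨g₁, hg₁, hRg₁⟩ := exists_lopt_ge (by simpa [lopts] using hLne) hn₁L
          have hrec := (ihN g₁ (int v₂) (hszl (Or.inl hg₁)) (wt_mem_lopts h₁' hg₁)
            (IsWT.int v₂) (valued_lopts hv₁ hg₁) hv₂ hn₁ hn₂).2.2.2.2.2.2.1
            v₂ rfl hL₂ hRg₁
          exact le_trans hrec (le_Lout_of_mem (mem_lopts_fext2_left f hg₁))
      | @node L₂ R₂ q' hLne hRne hLp hRp =>
        have h₂' : IsWT (node L₂ R₂) (!q') := IsWT.node hLne hRne hLp hRp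
        obtain ⟨g₂, hg₂, hRg₂⟩ := exists_lopt_ge (by simpa [lopts] using hLne) hL₂
        have hrec := (ihN K₁ g₂ (hszr (Or.inl hg₂)) h₁ (wt_mem_lopts h₂' hg₂)
          hv₁ (valued_lopts hv₂ hg₂) hn₁ hn₂).2.2.1 hd₁ hRg₂
        exact le_trans hrec (le_Lout_of_mem (mem_lopts_fext2_right f hg₂))
    · -- p4
      rintro v₁ rfl hle₁ hR₂
      cases h₂ with
      | int v₂ =>
        rw [Rout_int] at hR₂
        rw [fext2_int_int, Rout_int]
        exact base v₁ v₂ hle₁ hR₂ (valued_int hv₁) (valued_int hv₂)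
      | @node L₂ R₂ q' hLne hRne hLp hRp =>
        have h₂' : IsWT (node L₂ R₂) (!q') := IsWT.node hLne hRne hLp hRp
        refine le_Rout_of_opts (ropts_fext2_ne_nil f h₁ h₂' not_both_int_node_right) ?_
        intro k hk
        rw [ropts_fext2 f _ _ not_both_int_node_right] at hk
        rcases List.mem_append.mp hk with hk | hk
        · simp [ropts] at hk
        · rcases List.mem_map.mp hk with ⟨k₂', hk₂', rfl⟩
          exact (ihN (int v₁) k₂' (hszr (Or.inr hk₂')) (IsWT.int v₁)
            (wt_mem_ropts h₂' hk₂') hv₁ (valued_ropts hv₂ hk₂') hn₁ hn₂).2.2.2.2.2.1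
            v₁ rfl hle₁ (le_trans hR₂ (Rout_le_of_mem hk₂'))
    · -- p5
      rintro v₁ rfl hle₁ hL₂
      cases h₂ with
      | int v₂ =>
        rw [Lout_int] at hL₂
        rw [fext2_int_int, Lout_int]
        exact base v₁ v₂ hle₁ hL₂ (valued_int hv₁) (valued_int hv₂)
      | @node L₂ R₂ q' hLne hRne hLp hRp =>
        have h₂' : IsWT (node L₂ R₂) (!q') := IsWT.node hLne hRne hLp hRp
        obtain ⟨g₂, hg₂, hRg₂⟩ := exists_lopt_ge (by simpa [lopts] using hLne) hL₂
        have hrec := (ihN (int v₁) g₂ (hszr (Or.inl hg₂)) (IsWT.int v₁)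
          (wt_mem_lopts h₂' hg₂) hv₁ (valued_lopts hv₂ hg₂) hn₁ hn₂).2.2.2.2.1
          v₁ rfl hle₁ hRg₂
        exact le_trans hrec (le_Lout_of_mem (mem_lopts_fext2_right f hg₂))
    · -- p4'
      rintro v₂ rfl hle₂ hR₁
      cases h₁ with
      | int v₁ =>
        rw [Rout_int] at hR₁
        rw [fext2_int_int, Rout_int]
        exact base v₁ v₂ hR₁ hle₂ (valued_int hv₁) (valued_int hv₂)
      | @node L₁ R₁ q' hLne hRne hLp hRp =>
        have h₁' : IsWT (node L₁ R₁) (!q') := IsWT.node hLne hRne hLp hRp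
        refine le_Rout_of_opts (ropts_fext2_ne_nil f h₁' h₂ not_both_int_node_left) ?_
        intro k hk
        rw [ropts_fext2 f _ _ not_both_int_node_left] at hk
        rcases List.mem_append.mp hk with hk | hk
        · rcases List.mem_map.mp hk with ⟨k₁', hk₁', rfl⟩
          exact (ihN k₁' (int v₂) (hszl (Or.inr hk₁')) (wt_mem_ropts h₁' hk₁')
            (IsWT.int v₂) (valued_ropts hv₁ hk₁') hv₂ hn₁ hn₂).2.2.2.2.2.2.2
            v₂ rfl hle₂ (le_trans hR₁ (Rout_le_of_mem hk₁'))
        · simp [ropts] at hk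
    · -- p5'
      rintro v₂ rfl hle₂ hL₁
      cases h₁ with
      | int v₁ =>
        rw [Lout_int] at hL₁
        rw [fext2_int_int, Lout_int]
        exact base v₁ v₂ hL₁ hle₂ (valued_int hv₁) (valued_int hv₂)
      | @node L₁ R₁ q' hLne hRne hLp hRp =>
        have h₁' : IsWT (node L₁ R₁) (!q') := IsWT.node hLne hRne hLp hRp
        obtain ⟨g₁, hg₁, hRg₁⟩ := exists_lopt_ge (by simpa [lopts] using hLne) hL₁
        have hrec := (ihN g₁ (int v₂) (hszl (Or.inl hg₁)) (wt_mem_lopts h₁' hg₁)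
          (IsWT.int v₂) (valued_lopts hv₁ hg₁) hv₂ hn₁ hn₂).2.2.2.2.2.2.1
          v₂ rfl hle₂ hRg₁
        exact le_trans hrec (le_Lout_of_mem (mem_lopts_fext2_left f hg₁))

include hf in
/-- The packaged lower-bound lemma. -/
theorem pmain {K₁ K₂ : WT} {p₁ p₂ : Bool} (h₁ : IsWT K₁ p₁) (h₂ : IsWT K₂ p₂)
    (hv₁ : Valued S₁ K₁) (hv₂ : Valued S₂ K₂) {n₁ n₂ : ℤ} (hn₁ : n₁ ∈ S₁) (hn₂ : n₂ ∈ S₂)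
    (hd₁ : Dm true K₁ (int n₁)) (hd₂ : Dm true K₂ (int n₂)) :
    f n₁ n₂ ≤ Lout (fext2 f K₁ K₂) :=
  (psuite hf (sizeOf K₁ + sizeOf K₂) K₁ K₂ le_rfl h₁ h₂ hv₁ hv₂ hn₁ hn₂).2.1
    ((dm_int_right h₁ hd₁).1 rfl) hd₂

include hf in
theorem dsuite : ∀ (N : ℕ) (K₁ K₂ : WT), sizeOf K₁ + sizeOf K₂ ≤ N →
    ∀ {p₁ p₂ : Bool}, IsWT K₁ p₁ → IsWT K₂ p₂ → Valued S₁ K₁ → Valued S₂ K₂ →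
    ∀ {m₁ m₂ : ℤ}, m₁ ∈ S₁ → m₂ ∈ S₂ →
    ((Rout K₁ ≤ m₁ → Dm false (int m₂) K₂ → Rout (fext2 f K₁ K₂) ≤ f m₁ m₂) ∧
     (Lout K₁ ≤ m₁ → Dm false (int m₂) K₂ → Lout (fext2 f K₁ K₂) ≤ f m₁ m₂) ∧
     (Dm false (int m₁) K₁ → Rout K₂ ≤ m₂ → Rout (fext2 f K₁ K₂) ≤ f m₁ m₂) ∧
     (Dm false (int m₁) K₁ → Lout K₂ ≤ m₂ → Lout (fext2 f K₁ K₂) ≤ f m₁ m₂) ∧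
     (∀ v₁, K₁ = int v₁ → v₁ ≤ m₁ → Rout K₂ ≤ m₂ → Rout (fext2 f K₁ K₂) ≤ f m₁ m₂) ∧
     (∀ v₁, K₁ = int v₁ → v₁ ≤ m₁ → Lout K₂ ≤ m₂ → Lout (fext2 f K₁ K₂) ≤ f m₁ m₂) ∧
     (∀ v₂, K₂ = int v₂ → v₂ ≤ m₂ → Rout K₁ ≤ m₁ → Rout (fext2 f K₁ K₂) ≤ f m₁ m₂) ∧
     (∀ v₂, K₂ = int v₂ → v₂ ≤ m₂ → Lout K₁ ≤ m₁ → Lout (fext2 f K₁ K₂) ≤ f m₁ m₂)) := by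
  intro N
  induction N with
  | zero =>
    intro K₁ K₂ hsz
    exfalso
    cases K₁ <;> simp at hsz
  | succ N ihN =>
    intro K₁ K₂ hsz p₁ p₂ h₁ h₂ hv₁ hv₂ m₁ m₂ hm₁ hm₂
    have base : ∀ v₁ v₂, v₁ ≤ m₁ → v₂ ≤ m₂ → v₁ ∈ S₁ → v₂ ∈ S₂ →
        f v₁ v₂ ≤ f m₁ m₂ := fun v₁ v₂ hle₁ hle₂ hmm₁ hmm₂ =>
      hf v₁ m₁ v₂ m₂ hmm₁ hm₁ hmm₂ hm₂ hle₁ hle₂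
    have hszl : ∀ {k : WT}, k ∈ K₁.lopts ∨ k ∈ K₁.ropts → sizeOf k + sizeOf K₂ ≤ N := by
      rintro k (hk | hk)
      · have := sizeOf_lt_of_mem_lopts hk; omega
      · have := sizeOf_lt_of_mem_ropts hk; omega
    have hszr : ∀ {k : WT}, k ∈ K₂.lopts ∨ k ∈ K₂.ropts → sizeOf K₁ + sizeOf k ≤ N := by
      rintro k (hk | hk)
      · have := sizeOf_lt_of_mem_lopts hk; omega
      · have := sizeOf_lt_of_mem_ropts hk; omega
    have hszrr : ∀ {k k' : WT}, k ∈ K₂.lopts → k' ∈ k.ropts → sizeOf K₁ + sizeOf k' ≤ N := by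
      intro k k' hk hk'
      have h1 := sizeOf_lt_of_mem_lopts hk
      have h2 := sizeOf_lt_of_mem_ropts hk'
      omega
    have hszll : ∀ {k k' : WT}, k ∈ K₁.lopts → k' ∈ k.ropts → sizeOf k' + sizeOf K₂ ≤ N := by
      intro k k' hk hk'
      have h1 := sizeOf_lt_of_mem_lopts hk
      have h2 := sizeOf_lt_of_mem_ropts hk'
      omega
    refine ⟨?_, ?_, ?_, ?_, ?_, ?_, ?_, ?_⟩
    · -- d3 : Rout K₁ ≤ m₁, Dmf K₂ ⇒ Rout ≤ f
      intro hR₁ hd₂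
      cases h₁ with
      | int v₁ =>
        rw [Rout_int] at hR₁
        cases h₂ with
        | int v₂ =>
          have hle₂ := (dm_int_left (IsWT.int v₂) hd₂).1 rfl
          rw [Rout_int] at hle₂
          rw [fext2_int_int, Rout_int]
          exact base v₁ v₂ hR₁ hle₂ (valued_int hv₁) (valued_int hv₂)
        | @node L₂ R₂ q' hLne hRne hLp hRp =>
          have h₂' : IsWT (node L₂ R₂) (!q') := IsWT.node hLne hRne hLp hRp
          have hm₂R := (dm_int_left h₂' hd₂).1 rfl
          obtain ⟨g₂, hg₂, hLg₂⟩ := exists_ropt_le (by simpa [ropts] using hRne) hm₂R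
          have hrec := (ihN (int v₁) g₂ (hszr (Or.inr hg₂)) (IsWT.int v₁)
            (wt_mem_ropts h₂' hg₂) hv₁ (valued_ropts hv₂ hg₂) hm₁ hm₂).2.2.2.2.2.1
            v₁ rfl hR₁ hLg₂
          exact le_trans (Rout_le_of_mem (mem_ropts_fext2_right f hg₂)) hrec
      | @node L₁ R₁ q' hLne hRne hLp hRp =>
        have h₁' : IsWT (node L₁ R₁) (!q') := IsWT.node hLne hRne hLp hRp
        obtain ⟨g₁, hg₁, hLg₁⟩ := exists_ropt_le (by simpa [ropts] using hRne) hR₁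
        have hrec := (ihN g₁ K₂ (hszl (Or.inr hg₁)) (wt_mem_ropts h₁' hg₁) h₂
          (valued_ropts hv₁ hg₁) hv₂ hm₁ hm₂).2.1 hLg₁ hd₂
        exact le_trans (Rout_le_of_mem (mem_ropts_fext2_left f hg₁)) hrec
    · -- d2 : Lout K₁ ≤ m₁, Dmf K₂ ⇒ Lout ≤ f
      intro hL₁ hd₂
      by_cases hni : ∃ m n, K₁ = int m ∧ K₂ = int n
      · obtain ⟨v₁, v₂, rfl, rfl⟩ := hni
        rw [Lout_int] at hL₁
        rw [fext2_int_int, Lout_int]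
        have hle₂ := (dm_int_left h₂ hd₂).1 rfl
        rw [Rout_int] at hle₂
        exact base v₁ v₂ hL₁ hle₂ (valued_int hv₁) (valued_int hv₂)
      · refine Lout_le_of_opts (lopts_fext2_ne_nil f h₁ h₂ hni) ?_
        intro k hk
        rw [lopts_fext2 f _ _ hni] at hk
        rcases List.mem_append.mp hk with hk | hk
        · rcases List.mem_map.mp hk with ⟨k₁', hk₁', rfl⟩
          exact (ihN k₁' K₂ (hszl (Or.inl hk₁')) (wt_mem_lopts h₁ hk₁') h₂
            (valued_lopts hv₁ hk₁') hv₂ hm₁ hm₂).1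
            (le_trans (le_Lout_of_mem hk₁') hL₁) hd₂
        · rcases List.mem_map.mp hk with ⟨k₂', hk₂', rfl⟩
          rcases hd₂.cL k₂' hk₂' with ⟨g'', hmem, -⟩ | ⟨k₂'', hk₂'', hd₂''⟩
          · simp [lopts] at hmem
          · have hrec := (ihN K₁ k₂'' (hszrr hk₂' hk₂'') h₁
              (wt_mem_ropts (wt_mem_lopts h₂ hk₂') hk₂'') hv₁
              (valued_ropts (valued_lopts hv₂ hk₂') hk₂'') hm₁ hm₂).2.1 hL₁ hd₂''
            exact le_trans (Rout_le_of_mem (mem_ropts_fext2_right f hk₂'')) hrec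
    · -- d3' : Dmf K₁, Rout K₂ ≤ m₂ ⇒ Rout ≤ f
      intro hd₁ hR₂
      cases h₂ with
      | int v₂ =>
        rw [Rout_int] at hR₂
        cases h₁ with
        | int v₁ =>
          have hle₁ := (dm_int_left (IsWT.int v₁) hd₁).1 rfl
          rw [Rout_int] at hle₁
          rw [fext2_int_int, Rout_int]
          exact base v₁ v₂ hle₁ hR₂ (valued_int hv₁) (valued_int hv₂)
        | @node L₁ R₁ q' hLne hRne hLp hRp =>
          have h₁' : IsWT (node L₁ R₁) (!q') := IsWT.node hLne hRne hLp hRp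
          have hm₁R := (dm_int_left h₁' hd₁).1 rfl
          obtain ⟨g₁, hg₁, hLg₁⟩ := exists_ropt_le (by simpa [ropts] using hRne) hm₁R
          have hrec := (ihN g₁ (int v₂) (hszl (Or.inr hg₁)) (wt_mem_ropts h₁' hg₁)
            (IsWT.int v₂) (valued_ropts hv₁ hg₁) hv₂ hm₁ hm₂).2.2.2.2.2.2.2
            v₂ rfl hR₂ hLg₁
          exact le_trans (Rout_le_of_mem (mem_ropts_fext2_left f hg₁)) hrec
      | @node L₂ R₂ q' hLne hRne hLp hRp =>
        have h₂' : IsWT (node L₂ R₂) (!q') := IsWT.node hLne hRne hLp hRp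
        obtain ⟨g₂, hg₂, hLg₂⟩ := exists_ropt_le (by simpa [ropts] using hRne) hR₂
        have hrec := (ihN K₁ g₂ (hszr (Or.inr hg₂)) h₁ (wt_mem_ropts h₂' hg₂)
          hv₁ (valued_ropts hv₂ hg₂) hm₁ hm₂).2.2.2.1 hd₁ hLg₂
        exact le_trans (Rout_le_of_mem (mem_ropts_fext2_right f hg₂)) hrec
    · -- d2' : Dmf K₁, Lout K₂ ≤ m₂ ⇒ Lout ≤ f
      intro hd₁ hL₂
      by_cases hni : ∃ m n, K₁ = int m ∧ K₂ = int n
      · obtain ⟨v₁, v₂, rfl, rfl⟩ := hni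
        rw [Lout_int] at hL₂
        rw [fext2_int_int, Lout_int]
        have hle₁ := (dm_int_left h₁ hd₁).1 rfl
        rw [Rout_int] at hle₁
        exact base v₁ v₂ hle₁ hL₂ (valued_int hv₁) (valued_int hv₂)
      · refine Lout_le_of_opts (lopts_fext2_ne_nil f h₁ h₂ hni) ?_
        intro k hk
        rw [lopts_fext2 f _ _ hni] at hk
        rcases List.mem_append.mp hk with hk | hk
        · rcases List.mem_map.mp hk with ⟨k₁', hk₁', rfl⟩
          rcases hd₁.cL k₁' hk₁' with ⟨g'', hmem, -⟩ | ⟨k₁'', hk₁'', hd₁''⟩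
          · simp [lopts] at hmem
          · have hrec := (ihN k₁'' K₂ (hszll hk₁' hk₁'')
              (wt_mem_ropts (wt_mem_lopts h₁ hk₁') hk₁'') h₂
              (valued_ropts (valued_lopts hv₁ hk₁') hk₁'') hv₂ hm₁ hm₂).2.2.2.1 hd₁'' hL₂
            exact le_trans (Rout_le_of_mem (mem_ropts_fext2_left f hk₁'')) hrec
        · rcases List.mem_map.mp hk with ⟨k₂', hk₂', rfl⟩
          exact (ihN K₁ k₂' (hszr (Or.inl hk₂')) h₁ (wt_mem_lopts h₂ hk₂') hv₁
            (valued_lopts hv₂ hk₂') hm₁ hm₂).2.2.1 hd₁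
            (le_trans (le_Lout_of_mem hk₂') hL₂)
    · -- d5 : K₁ = int v₁ ≤ m₁, Rout K₂ ≤ m₂ ⇒ Rout ≤ f
      rintro v₁ rfl hle₁ hR₂
      cases h₂ with
      | int v₂ =>
        rw [Rout_int] at hR₂
        rw [fext2_int_int, Rout_int]
        exact base v₁ v₂ hle₁ hR₂ (valued_int hv₁) (valued_int hv₂)
      | @node L₂ R₂ q' hLne hRne hLp hRp =>
        have h₂' : IsWT (node L₂ R₂) (!q') := IsWT.node hLne hRne hLp hRp
        obtain ⟨g₂, hg₂, hLg₂⟩ := exists_ropt_le (by simpa [ropts] using hRne) hR₂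
        have hrec := (ihN (int v₁) g₂ (hszr (Or.inr hg₂)) (IsWT.int v₁)
          (wt_mem_ropts h₂' hg₂) hv₁ (valued_ropts hv₂ hg₂) hm₁ hm₂).2.2.2.2.2.1
          v₁ rfl hle₁ hLg₂
        exact le_trans (Rout_le_of_mem (mem_ropts_fext2_right f hg₂)) hrec
    · -- d4 : K₁ = int v₁ ≤ m₁, Lout K₂ ≤ m₂ ⇒ Lout ≤ f
      rintro v₁ rfl hle₁ hL₂
      cases h₂ with
      | int v₂ =>
        rw [Lout_int] at hL₂
        rw [fext2_int_int, Lout_int]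
        exact base v₁ v₂ hle₁ hL₂ (valued_int hv₁) (valued_int hv₂)
      | @node L₂ R₂ q' hLne hRne hLp hRp =>
        have h₂' : IsWT (node L₂ R₂) (!q') := IsWT.node hLne hRne hLp hRp
        refine Lout_le_of_opts (lopts_fext2_ne_nil f h₁ h₂' not_both_int_node_right) ?_
        intro k hk
        rw [lopts_fext2 f _ _ not_both_int_node_right] at hk
        rcases List.mem_append.mp hk with hk | hk
        · simp [lopts] at hk
        · rcases List.mem_map.mp hk with ⟨k₂', hk₂', rfl⟩
          exact (ihN (int v₁) k₂' (hszr (Or.inl hk₂')) (IsWT.int v₁)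
            (wt_mem_lopts h₂' hk₂') hv₁ (valued_lopts hv₂ hk₂') hm₁ hm₂).2.2.2.2.1
            v₁ rfl hle₁ (le_trans (le_Lout_of_mem hk₂') hL₂)
    · -- d5' : K₂ = int v₂ ≤ m₂, Rout K₁ ≤ m₁ ⇒ Rout ≤ f
      rintro v₂ rfl hle₂ hR₁
      cases h₁ with
      | int v₁ =>
        rw [Rout_int] at hR₁
        rw [fext2_int_int, Rout_int]
        exact base v₁ v₂ hR₁ hle₂ (valued_int hv₁) (valued_int hv₂)
      | @node L₁ R₁ q' hLne hRne hLp hRp =>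
        have h₁' : IsWT (node L₁ R₁) (!q') := IsWT.node hLne hRne hLp hRp
        obtain ⟨g₁, hg₁, hLg₁⟩ := exists_ropt_le (by simpa [ropts] using hRne) hR₁
        have hrec := (ihN g₁ (int v₂) (hszl (Or.inr hg₁)) (wt_mem_ropts h₁' hg₁)
          (IsWT.int v₂) (valued_ropts hv₁ hg₁) hv₂ hm₁ hm₂).2.2.2.2.2.2.2
          v₂ rfl hle₂ hLg₁
        exact le_trans (Rout_le_of_mem (mem_ropts_fext2_left f hg₁)) hrec
    · -- d4' : K₂ = int v₂ ≤ m₂, Lout K₁ ≤ m₁ ⇒ Lout ≤ f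
      rintro v₂ rfl hle₂ hL₁
      cases h₁ with
      | int v₁ =>
        rw [Lout_int] at hL₁
        rw [fext2_int_int, Lout_int]
        exact base v₁ v₂ hL₁ hle₂ (valued_int hv₁) (valued_int hv₂)
      | @node L₁ R₁ q' hLne hRne hLp hRp =>
        have h₁' : IsWT (node L₁ R₁) (!q') := IsWT.node hLne hRne hLp hRp
        refine Lout_le_of_opts (lopts_fext2_ne_nil f h₁' h₂ not_both_int_node_left) ?_
        intro k hk
        rw [lopts_fext2 f _ _ not_both_int_node_left] at hk
        rcases List.mem_append.mp hk with hk | hk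
        · rcases List.mem_map.mp hk with ⟨k₁', hk₁', rfl⟩
          exact (ihN k₁' (int v₂) (hszl (Or.inl hk₁')) (wt_mem_lopts h₁' hk₁')
            (IsWT.int v₂) (valued_lopts hv₁ hk₁') hv₂ hm₁ hm₂).2.2.2.2.2.2.1
            v₂ rfl hle₂ (le_trans (le_Lout_of_mem hk₁') hL₁)
        · simp [lopts] at hk

include hf in
/-- The packaged upper-bound lemma. -/
theorem dmain {K₁ K₂ : WT} {p₁ p₂ : Bool} (h₁ : IsWT K₁ p₁) (h₂ : IsWT K₂ p₂)
    (hv₁ : Valued S₁ K₁) (hv₂ : Valued S₂ K₂) {m₁ m₂ : ℤ} (hm₁ : m₁ ∈ S₁) (hm₂ : m₂ ∈ S₂)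
    (hd₁ : Dm false (int m₁) K₁) (hd₂ : Dm false (int m₂) K₂) :
    Rout (fext2 f K₁ K₂) ≤ f m₁ m₂ :=
  (dsuite hf (sizeOf K₁ + sizeOf K₂) K₁ K₂ le_rfl h₁ h₂ hv₁ hv₂ hm₁ hm₂).2.2.1
    hd₁ ((dm_int_left h₂ hd₂).1 rfl)

end suites

/-! ### well-temperedness of fext2 -/

theorem wt_fext2 (f : ℤ → ℤ → ℤ) :
    ∀ {G H : WT} {p q : Bool}, IsWT G p → IsWT H q → IsWT (fext2 f G H) (xor p q) := by
  intro G H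
  induction G, H using indSize2 with
  | h G H ih =>
    intro p q h1 h2
    by_cases hni : ∃ m n, G = int m ∧ H = int n
    · obtain ⟨m, n, rfl, rfl⟩ := hni
      cases h1; cases h2
      rw [fext2_int_int]
      exact IsWT.int _
    · have hGne : G.lopts ≠ [] ∨ H.lopts ≠ [] := by
        cases G with
        | int m =>
          cases H with
          | int n => exact absurd ⟨m, n, rfl, rfl⟩ hni
          | node L R => exact Or.inr (by simpa [lopts] using wt_lopts_ne_nil h2)
        | node L R => exact Or.inl (by simpa [lopts] using wt_lopts_ne_nil h1)
      have hGne' : G.ropts ≠ [] ∨ H.ropts ≠ [] := by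
        cases G with
        | int m =>
          cases H with
          | int n => exact absurd ⟨m, n, rfl, rfl⟩ hni
          | node L R => exact Or.inr (by simpa [ropts] using wt_ropts_ne_nil h2)
        | node L R => exact Or.inl (by simpa [ropts] using wt_ropts_ne_nil h1)
      -- parity of options is !(p ^^ q)
      have hopt : ∀ k ∈ (fext2 f G H).lopts ++ (fext2 f G H).ropts, IsWT k (!(xor p q)) := by
        intro k hk
        have hk' : k ∈ (G.lopts.map fun g => fext2 f g H) ++ (H.lopts.map fun h => fext2 f G h)
            ∨ k ∈ (G.ropts.map fun g => fext2 f g H) ++ (H.ropts.map fun h => fext2 f G h) := by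
          rcases List.mem_append.mp hk with hk | hk
          · rw [lopts_fext2 f G H hni] at hk; exact Or.inl hk
          · rw [ropts_fext2 f G H hni] at hk; exact Or.inr hk
        have hsplit : (∃ g, (g ∈ G.lopts ∨ g ∈ G.ropts) ∧ k = fext2 f g H) ∨
            (∃ h', (h' ∈ H.lopts ∨ h' ∈ H.ropts) ∧ k = fext2 f G h') := by
          rcases hk' with hk | hk <;> rcases List.mem_append.mp hk with hk | hk
          · rcases List.mem_map.mp hk with ⟨g, hg, rfl⟩; exact Or.inl ⟨g, Or.inl hg, rfl⟩
          · rcases List.mem_map.mp hk with ⟨h', hh, rfl⟩; exact Or.inr ⟨h', Or.inl hh, rfl⟩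
          · rcases List.mem_map.mp hk with ⟨g, hg, rfl⟩; exact Or.inl ⟨g, Or.inr hg, rfl⟩
          · rcases List.mem_map.mp hk with ⟨h', hh, rfl⟩; exact Or.inr ⟨h', Or.inr hh, rfl⟩
        rcases hsplit with ⟨g, hg, rfl⟩ | ⟨h', hh, rfl⟩
        · have hgwt : IsWT g (!p) := by
            rcases hg with hg | hg
            · exact wt_mem_lopts h1 hg
            · exact wt_mem_ropts h1 hg
          have hsz : sizeOf g + sizeOf H < sizeOf G + sizeOf H := by
            rcases hg with hg | hg
            · have := sizeOf_lt_of_mem_lopts hg; omega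
            · have := sizeOf_lt_of_mem_ropts hg; omega
          have := ih g H hsz hgwt h2
          have hb : xor (!p) q = !(xor p q) := by cases p <;> cases q <;> rfl
          rwa [hb] at this
        · have hhwt : IsWT h' (!q) := by
            rcases hh with hh | hh
            · exact wt_mem_lopts h2 hh
            · exact wt_mem_ropts h2 hh
          have hsz : sizeOf G + sizeOf h' < sizeOf G + sizeOf H := by
            rcases hh with hh | hh
            · have := sizeOf_lt_of_mem_lopts hh; omega
            · have := sizeOf_lt_of_mem_ropts hh; omega
          have := ih G h' hsz h1 hhwt
          have hb : xor p (!q) = !(xor p q) := by cases p <;> cases q <;> rfl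
          rwa [hb] at this
      have hshape : ∃ L R, fext2 f G H = node L R := by
        cases G with
        | int m =>
          cases H with
          | int n => exact absurd ⟨m, n, rfl, rfl⟩ hni
          | node L R => rw [fext2_int_node]; exact ⟨_, _, rfl⟩
        | node L R => rw [fext2_node_left]; exact ⟨_, _, rfl⟩
      obtain ⟨L, R, hLR⟩ := hshape
      rw [hLR]
      have hLne : L ≠ [] := by
        have := lopts_fext2_ne_nil f h1 h2 hni
        rw [hLR] at this
        simpa [lopts] using this
      have hRne : R ≠ [] := by
        have := ropts_fext2_ne_nil f h1 h2 hni
        rw [hLR] at this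
        simpa [ropts] using this
      have hxx : xor p q = !(!(xor p q)) := by simp
      rw [hxx]
      refine IsWT.node hLne hRne ?_ ?_
      · intro g hg
        exact hopt g (by rw [hLR]; exact List.mem_append_left _ (by simpa [lopts] using hg))
      · intro g hg
        exact hopt g (by rw [hLR]; exact List.mem_append_right _ (by simpa [ropts] using hg))

theorem opts_add_ne_nil {P X : WT} {r : Bool} (hX : IsWT X r)
    (h : P.lopts ≠ [] ∨ X.lopts ≠ []) (h' : P.ropts ≠ [] ∨ X.ropts ≠ []) :
    (add P X).lopts ≠ [] ∧ (add P X).ropts ≠ [] := by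
  constructor
  · rw [lopts_add]
    intro hcon
    rcases List.append_eq_nil_iff.mp hcon with ⟨h1, h2⟩
    rcases h with h | h
    · exact h (List.map_eq_nil_iff.mp h1)
    · exact h (List.map_eq_nil_iff.mp h2)
  · rw [ropts_add]
    intro hcon
    rcases List.append_eq_nil_iff.mp hcon with ⟨h1, h2⟩
    rcases h' with h' | h'
    · exact h' (List.map_eq_nil_iff.mp h1)
    · exact h' (List.map_eq_nil_iff.mp h2)

/-! ### the two-coordinate soundness theorem -/

section soundness

variable {S₁ S₂ : Set ℤ} {f : ℤ → ℤ → ℤ}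
variable (hf : ∀ x x' y y', x ∈ S₁ → x' ∈ S₁ → y ∈ S₂ → y' ∈ S₂ → x ≤ x' → y ≤ y' →
      f x y ≤ f x' y')

include hf in
theorem soundness2 : ∀ (N : ℕ) (G₁ H₁ G₂ H₂ X : WT),
    sizeOf G₁ + sizeOf H₁ + sizeOf G₂ + sizeOf H₂ + sizeOf X ≤ N →
    ∀ {p₁ p₂ r b₁ b₂ : Bool} (t : Bool),
    IsWT G₁ p₁ → IsWT H₁ p₁ → IsWT G₂ p₂ → IsWT H₂ p₂ → IsWT X r →
    Valued S₁ G₁ → Valued S₁ H₁ → Valued S₂ G₂ → Valued S₂ H₂ →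
    Dm b₁ G₁ H₁ → Dm b₂ G₂ H₂ →
    b₁ = !(p₂ ^^ (r ^^ t)) → b₂ = !(p₁ ^^ (r ^^ t)) →
    cond t (Rout (add (fext2 f H₁ H₂) X) ≤ Rout (add (fext2 f G₁ G₂) X))
           (Lout (add (fext2 f H₁ H₂) X) ≤ Lout (add (fext2 f G₁ G₂) X)) := by
  intro N
  induction N with
  | zero =>
    intro G₁ H₁ G₂ H₂ X hsz
    exfalso
    cases G₁ <;> simp at hsz
  | succ N ihN =>
    intro G₁ H₁ G₂ H₂ X hsz p₁ p₂ r b₁ b₂ t hwG₁ hwH₁ hwG₂ hwH₂ hwX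
      hvG₁ hvH₁ hvG₂ hvH₂ hd₁ hd₂ hb₁ hb₂
    have hFG : IsWT (fext2 f G₁ G₂) (xor p₁ p₂) := wt_fext2 f hwG₁ hwG₂
    have hFH : IsWT (fext2 f H₁ H₂) (xor p₁ p₂) := wt_fext2 f hwH₁ hwH₂
    cases t with
    | false =>
      show Lout (add (fext2 f H₁ H₂) X) ≤ Lout (add (fext2 f G₁ G₂) X)
      by_cases hALL : ∃ n₁ n₂ cc, H₁ = int n₁ ∧ H₂ = int n₂ ∧ X = int cc
      · obtain ⟨n₁, n₂, cc, rfl, rfl, rfl⟩ := hALL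
        have hp₁ : p₁ = false := by cases hwH₁; rfl
        have hp₂ : p₂ = false := by cases hwH₂; rfl
        have hr : r = false := by cases hwX; rfl
        subst hp₁; subst hp₂; subst hr
        simp only [Bool.xor_false, Bool.not_false] at hb₁ hb₂
        subst hb₁; subst hb₂
        rw [fext2_int_int, add_int_int, Lout_int, Lout_add_int hFG cc]
        have := pmain hf hwG₁ hwG₂ hvG₁ hvG₂ (valued_int hvH₁) (valued_int hvH₂) hd₁ hd₂
        omega
      · -- bound each Left option of (fext2 f H₁ H₂) + X
        have hne : (add (fext2 f H₁ H₂) X).lopts ≠ [] := by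
          rw [lopts_add]
          intro hcon
          rcases List.append_eq_nil_iff.mp hcon with ⟨e1, e2⟩
          cases hXc : X with
          | node LX RX =>
            subst hXc
            exact wt_lopts_ne_nil hwX (by simpa [lopts] using List.map_eq_nil_iff.mp e2)
          | int cc =>
            subst hXc
            have hni : ¬(∃ m n, H₁ = int m ∧ H₂ = int n) := by
              rintro ⟨m, n, rfl, rfl⟩
              exact hALL ⟨m, n, cc, rfl, rfl, rfl⟩
            exact lopts_fext2_ne_nil f hwH₁ hwH₂ hni (List.map_eq_nil_iff.mp e1)
        refine Lout_le_of_opts hne ?_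
        intro k hk
        rw [lopts_add] at hk
        rcases List.mem_append.mp hk with hk | hk
        · rcases List.mem_map.mp hk with ⟨k', hk', rfl⟩
          have hni : ¬(∃ m n, H₁ = int m ∧ H₂ = int n) := by
            rintro ⟨m, n, rfl, rfl⟩
            rw [fext2_int_int] at hk'
            simp [lopts] at hk'
          rw [lopts_fext2 f _ _ hni] at hk'
          rcases List.mem_append.mp hk' with hk' | hk'
          · -- a move of Left in the first coordinate
            rcases List.mem_map.mp hk' with ⟨h₁, hh₁, rfl⟩
            rcases hd₁.cL h₁ hh₁ with ⟨g₁, hg₁, hd'⟩ | ⟨h₁', hh₁', hd'⟩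
            · have hIH := ihN g₁ h₁ G₂ H₂ X
                (by have := sizeOf_lt_of_mem_lopts hg₁
                    have := sizeOf_lt_of_mem_lopts hh₁; omega) true
                (wt_mem_lopts hwG₁ hg₁) (wt_mem_lopts hwH₁ hh₁) hwG₂ hwH₂ hwX
                (valued_lopts hvG₁ hg₁) (valued_lopts hvH₁ hh₁) hvG₂ hvH₂ hd' hd₂
                (by rw [hb₁]; cases p₂ <;> cases r <;> rfl)
                (by rw [hb₂]; cases p₁ <;> cases r <;> rfl)
              exact le_trans hIH
                (le_Lout_of_mem (mem_lopts_add_left (mem_lopts_fext2_left f hg₁)))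
            · have hwh₁ := wt_mem_lopts hwH₁ hh₁
              have hwh₁' : IsWT h₁' p₁ := by
                have := wt_mem_ropts hwh₁ hh₁'
                simpa using this
              have hch : Rout (add (fext2 f h₁ H₂) X) ≤ Lout (add (fext2 f h₁' H₂) X) :=
                Rout_le_of_mem (mem_ropts_add_left (mem_ropts_fext2_left f hh₁'))
              have hIH := ihN G₁ h₁' G₂ H₂ X
                (by have h1 := sizeOf_lt_of_mem_lopts hh₁
                    have h2 := sizeOf_lt_of_mem_ropts hh₁'; omega) false
                hwG₁ hwh₁' hwG₂ hwH₂ hwX hvG₁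
                (valued_ropts (valued_lopts hvH₁ hh₁) hh₁') hvG₂ hvH₂ hd' hd₂ hb₁ hb₂
              exact le_trans hch hIH
          · -- a move of Left in the second coordinate
            rcases List.mem_map.mp hk' with ⟨h₂, hh₂, rfl⟩
            rcases hd₂.cL h₂ hh₂ with ⟨g₂, hg₂, hd'⟩ | ⟨h₂', hh₂', hd'⟩
            · have hIH := ihN G₁ H₁ g₂ h₂ X
                (by have := sizeOf_lt_of_mem_lopts hg₂
                    have := sizeOf_lt_of_mem_lopts hh₂; omega) true
                hwG₁ hwH₁ (wt_mem_lopts hwG₂ hg₂) (wt_mem_lopts hwH₂ hh₂) hwX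
                hvG₁ hvH₁ (valued_lopts hvG₂ hg₂) (valued_lopts hvH₂ hh₂) hd₁ hd'
                (by rw [hb₁]; cases p₂ <;> cases r <;> rfl)
                (by rw [hb₂]; cases p₁ <;> cases r <;> rfl)
              exact le_trans hIH
                (le_Lout_of_mem (mem_lopts_add_left (mem_lopts_fext2_right f hg₂)))
            · have hwh₂ := wt_mem_lopts hwH₂ hh₂
              have hwh₂' : IsWT h₂' p₂ := by
                have := wt_mem_ropts hwh₂ hh₂'
                simpa using this
              have hch : Rout (add (fext2 f H₁ h₂) X) ≤ Lout (add (fext2 f H₁ h₂') X) :=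
                Rout_le_of_mem (mem_ropts_add_left (mem_ropts_fext2_right f hh₂'))
              have hIH := ihN G₁ H₁ G₂ h₂' X
                (by have h1 := sizeOf_lt_of_mem_lopts hh₂
                    have h2 := sizeOf_lt_of_mem_ropts hh₂'; omega) false
                hwG₁ hwH₁ hwG₂ hwh₂' hwX hvG₁ hvH₁ hvG₂
                (valued_ropts (valued_lopts hvH₂ hh₂) hh₂') hd₁ hd' hb₁ hb₂
              exact le_trans hch hIH
        · -- a move of Left in the context X
          rcases List.mem_map.mp hk with ⟨x, hx, rfl⟩
          have hIH := ihN G₁ H₁ G₂ H₂ x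
            (by have := sizeOf_lt_of_mem_lopts hx; omega) true
            hwG₁ hwH₁ hwG₂ hwH₂ (wt_mem_lopts hwX hx) hvG₁ hvH₁ hvG₂ hvH₂ hd₁ hd₂
            (by rw [hb₁]; cases p₂ <;> cases r <;> rfl)
            (by rw [hb₂]; cases p₁ <;> cases r <;> rfl)
          exact le_trans hIH (le_Lout_of_mem (mem_lopts_add_right hx))
    | true =>
      show Rout (add (fext2 f H₁ H₂) X) ≤ Rout (add (fext2 f G₁ G₂) X)
      by_cases hALL : ∃ m₁ m₂ cc, G₁ = int m₁ ∧ G₂ = int m₂ ∧ X = int cc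
      · obtain ⟨m₁, m₂, cc, rfl, rfl, rfl⟩ := hALL
        have hp₁ : p₁ = false := by cases hwG₁; rfl
        have hp₂ : p₂ = false := by cases hwG₂; rfl
        have hr : r = false := by cases hwX; rfl
        subst hp₁; subst hp₂; subst hr
        simp only [Bool.xor_false, Bool.xor_true, Bool.not_true, Bool.not_false] at hb₁ hb₂
        subst hb₁; subst hb₂
        rw [fext2_int_int, add_int_int, Rout_int, Rout_add_int hFH cc]
        have := dmain hf hwH₁ hwH₂ hvH₁ hvH₂ (valued_int hvG₁) (valued_int hvG₂) hd₁ hd₂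
        omega
      · have hne : (add (fext2 f G₁ G₂) X).ropts ≠ [] := by
          rw [ropts_add]
          intro hcon
          rcases List.append_eq_nil_iff.mp hcon with ⟨e1, e2⟩
          cases hXc : X with
          | node LX RX =>
            subst hXc
            exact wt_ropts_ne_nil hwX (by simpa [ropts] using List.map_eq_nil_iff.mp e2)
          | int cc =>
            subst hXc
            have hni : ¬(∃ m n, G₁ = int m ∧ G₂ = int n) := by
              rintro ⟨m, n, rfl, rfl⟩
              exact hALL ⟨m, n, cc, rfl, rfl, rfl⟩
            exact ropts_fext2_ne_nil f hwG₁ hwG₂ hni (List.map_eq_nil_iff.mp e1)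
        refine le_Rout_of_opts hne ?_
        intro k hk
        rw [ropts_add] at hk
        rcases List.mem_append.mp hk with hk | hk
        · rcases List.mem_map.mp hk with ⟨k', hk', rfl⟩
          have hni : ¬(∃ m n, G₁ = int m ∧ G₂ = int n) := by
            rintro ⟨m, n, rfl, rfl⟩
            rw [fext2_int_int] at hk'
            simp [ropts] at hk'
          rw [ropts_fext2 f _ _ hni] at hk'
          rcases List.mem_append.mp hk' with hk' | hk'
          · -- a move of Right in the first coordinate
            rcases List.mem_map.mp hk' with ⟨g₁', hg₁', rfl⟩
            rcases hd₁.cR g₁' hg₁' with ⟨h₁'', hh₁'', hd'⟩ | ⟨g₁'', hg₁'', hd'⟩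
            · have hIH := ihN g₁' h₁'' G₂ H₂ X
                (by have := sizeOf_lt_of_mem_ropts hg₁'
                    have := sizeOf_lt_of_mem_ropts hh₁''; omega) false
                (wt_mem_ropts hwG₁ hg₁') (wt_mem_ropts hwH₁ hh₁'') hwG₂ hwH₂ hwX
                (valued_ropts hvG₁ hg₁') (valued_ropts hvH₁ hh₁'') hvG₂ hvH₂ hd' hd₂
                (by rw [hb₁]; cases p₂ <;> cases r <;> rfl)
                (by rw [hb₂]; cases p₁ <;> cases r <;> rfl)
              refine le_trans (le_trans ?_ hIH) le_rfl
              exact Rout_le_of_mem (mem_ropts_add_left (mem_ropts_fext2_left f hh₁''))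
            · have hwg₁' := wt_mem_ropts hwG₁ hg₁'
              have hwg₁'' : IsWT g₁'' p₁ := by
                have := wt_mem_lopts hwg₁' hg₁''
                simpa using this
              have hIH := ihN g₁'' H₁ G₂ H₂ X
                (by have h1 := sizeOf_lt_of_mem_ropts hg₁'
                    have h2 := sizeOf_lt_of_mem_lopts hg₁''; omega) true
                hwg₁'' hwH₁ hwG₂ hwH₂ hwX
                (valued_lopts (valued_ropts hvG₁ hg₁') hg₁'') hvH₁ hvG₂ hvH₂ hd' hd₂ hb₁ hb₂
              refine le_trans hIH ?_
              exact le_Lout_of_mem (mem_lopts_add_left (mem_lopts_fext2_left f hg₁''))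
          · -- a move of Right in the second coordinate
            rcases List.mem_map.mp hk' with ⟨g₂', hg₂', rfl⟩
            rcases hd₂.cR g₂' hg₂' with ⟨h₂'', hh₂'', hd'⟩ | ⟨g₂'', hg₂'', hd'⟩
            · have hIH := ihN G₁ H₁ g₂' h₂'' X
                (by have := sizeOf_lt_of_mem_ropts hg₂'
                    have := sizeOf_lt_of_mem_ropts hh₂''; omega) false
                hwG₁ hwH₁ (wt_mem_ropts hwG₂ hg₂') (wt_mem_ropts hwH₂ hh₂'') hwX
                hvG₁ hvH₁ (valued_ropts hvG₂ hg₂') (valued_ropts hvH₂ hh₂'') hd₁ hd'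
                (by rw [hb₁]; cases p₂ <;> cases r <;> rfl)
                (by rw [hb₂]; cases p₁ <;> cases r <;> rfl)
              refine le_trans ?_ hIH
              exact Rout_le_of_mem (mem_ropts_add_left (mem_ropts_fext2_right f hh₂''))
            · have hwg₂' := wt_mem_ropts hwG₂ hg₂'
              have hwg₂'' : IsWT g₂'' p₂ := by
                have := wt_mem_lopts hwg₂' hg₂''
                simpa using this
              have hIH := ihN G₁ H₁ g₂'' H₂ X
                (by have h1 := sizeOf_lt_of_mem_ropts hg₂'
                    have h2 := sizeOf_lt_of_mem_lopts hg₂''; omega) true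
                hwG₁ hwH₁ hwg₂'' hwH₂ hwX hvG₁ hvH₁
                (valued_lopts (valued_ropts hvG₂ hg₂') hg₂'') hvH₂ hd₁ hd' hb₁ hb₂
              refine le_trans hIH ?_
              exact le_Lout_of_mem (mem_lopts_add_left (mem_lopts_fext2_right f hg₂''))
        · -- a move of Right in the context X
          rcases List.mem_map.mp hk with ⟨x, hx, rfl⟩
          have hIH := ihN G₁ H₁ G₂ H₂ x
            (by have := sizeOf_lt_of_mem_ropts hx; omega) false
            hwG₁ hwH₁ hwG₂ hwH₂ (wt_mem_ropts hwX hx) hvG₁ hvH₁ hvG₂ hvH₂ hd₁ hd₂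
            (by rw [hb₁]; cases p₂ <;> cases r <;> rfl)
            (by rw [hb₂]; cases p₁ <;> cases r <;> rfl)
          refine le_trans ?_ hIH
          exact Rout_le_of_mem (mem_ropts_add_right hx)

end soundness

end WT

/-- if f : S₁ × S₂ → ℤ is order-preserving, G₁ ≳ H₁ (S₁-valued) and
G₂ ≳ H₂ (S₂-valued), then f̃(G₁,G₂) ≳ f̃(H₁,H₂). -/
theorem fext2_monotone (S₁ S₂ : Set ℤ) (f : ℤ → ℤ → ℤ)
    (hf : ∀ x x' y y', x ∈ S₁ → x' ∈ S₁ → y ∈ S₂ → y' ∈ S₂ → x ≤ x' → y ≤ y' →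
      f x y ≤ f x' y')
    (G₁ H₁ G₂ H₂ : WT) (hG₁ : G₁.Wt) (hH₁ : H₁.Wt) (hG₂ : G₂.Wt) (hH₂ : H₂.Wt)
    (hvG₁ : G₁.Valued S₁) (hvH₁ : H₁.Valued S₁) (hvG₂ : G₂.Valued S₂) (hvH₂ : H₂.Valued S₂)
    (h₁ : WT.Ge G₁ H₁) (h₂ : WT.Ge G₂ H₂) :
    WT.Ge (WT.fext2 f G₁ G₂) (WT.fext2 f H₁ H₂) := by
  obtain ⟨p₁, hwG₁⟩ := hG₁
  obtain ⟨q₁, hwH₁⟩ := hH₁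
  obtain ⟨p₂, hwG₂⟩ := hG₂
  obtain ⟨q₂, hwH₂⟩ := hH₂
  have e₁ : p₁ = q₁ := WT.par_eq_of_ge hwG₁ hwH₁ h₁
  have e₂ : p₂ = q₂ := WT.par_eq_of_ge hwG₂ hwH₂ h₂
  subst e₁
  subst e₂
  have hdm₁ : ∀ b, WT.Dm b G₁ H₁ :=
    fun b => WT.dm_of_geHalf G₁ H₁ hwG₁ hwH₁ (WT.geHalf_of_ge h₁ b)
  have hdm₂ : ∀ b, WT.Dm b G₂ H₂ :=
    fun b => WT.dm_of_geHalf G₂ H₂ hwG₂ hwH₂ (WT.geHalf_of_ge h₂ b)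
  intro X hX
  obtain ⟨r, hwX⟩ := hX
  constructor
  · exact WT.soundness2 hf (sizeOf G₁ + sizeOf H₁ + sizeOf G₂ + sizeOf H₂ + sizeOf X)
      G₁ H₁ G₂ H₂ X le_rfl false hwG₁ hwH₁ hwG₂ hwH₂ hwX hvG₁ hvH₁ hvG₂ hvH₂
      (hdm₁ _) (hdm₂ _) rfl rfl
  · exact WT.soundness2 hf (sizeOf G₁ + sizeOf H₁ + sizeOf G₂ + sizeOf H₂ + sizeOf X)
      G₁ H₁ G₂ H₂ X le_rfl true hwG₁ hwH₁ hwG₂ hwH₂ hwX hvG₁ hvH₁ hvG₂ hvH₂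
      (hdm₁ _) (hdm₂ _) rfl rfl
end

section
/- Define ψ from well-tempered scoring games to normal-play partizan games by ψ(n) = n for integers n and ψ({G^L|G^R}) = {ψ(G^L)|ψ(G^R)}. Then for any well-tempered scoring game G: if G is even-tempered, ψ(G) ≥ 0 (in the partizan ordering) if and only if R(G) ≥ 0; if G is odd-tempered, ψ(G) ⊳ 0 (greater than or incomparable to 0) if and only if L(G) ≥ 0. -/
universe u

namespace SetTheory

/-- Pre-games (as formerly in Mathlib's `SetTheory.PGame`). -/
inductive PGame : Type (u + 1)
  | mk : ∀ α β : Type u, (α → PGame) → (β → PGame) → PGame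

namespace PGame

/-- Inner recursion (on `y`) for `leLF`, given the values for the options of `x`. -/
def leLFAux {xl xr : Type u} (fL : xl → PGame.{u} → Prop × Prop)
    (fR : xr → PGame.{u} → Prop × Prop) : PGame.{u} → Prop × Prop
  | mk yl yr yL yR =>
    ((∀ i, (fL i (mk yl yr yL yR)).2) ∧ ∀ j, (leLFAux fL fR (yR j)).2,
      (∃ i, (leLFAux fL fR (yL i)).1) ∨ ∃ j, (fR j (mk yl yr yL yR)).1)

/-- `leLF x y = (x ≤ y, x ⧏ y)`, by recursion on `x` then `y`. -/
def leLF : PGame.{u} → PGame.{u} → Prop × Prop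
  | mk _ _ xL xR => leLFAux (fun i => leLF (xL i)) (fun j => leLF (xR j))

instance : LE PGame.{u} := ⟨fun x y => (leLF x y).1⟩

/-- `x ⧏ y` : `¬ y ≤ x`. -/
def LF (x y : PGame.{u}) : Prop := ¬y ≤ x

infix:50 " ⧏ " => PGame.LF

instance : Zero PGame.{u} := ⟨⟨PEmpty, PEmpty, PEmpty.elim, PEmpty.elim⟩⟩

instance : One PGame.{u} := ⟨⟨PUnit, PEmpty, fun _ => 0, PEmpty.elim⟩⟩

/-- Negation of a pre-game. -/
def neg : PGame.{u} → PGame.{u}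
  | ⟨l, r, L, R⟩ => ⟨r, l, fun i => neg (R i), fun i => neg (L i)⟩

instance : Neg PGame.{u} := ⟨neg⟩

/-- Inner recursion (on `y`) for `add`, given the values for the options of `x`. -/
def addAux {xl xr : Type u} (fL : xl → PGame.{u} → PGame.{u})
    (fR : xr → PGame.{u} → PGame.{u}) : PGame.{u} → PGame.{u}
  | mk yl yr yL yR =>
    mk (xl ⊕ yl) (xr ⊕ yr)
      (Sum.rec (fun i => fL i (mk yl yr yL yR)) (fun i => addAux fL fR (yL i)))
      (Sum.rec (fun i => fR i (mk yl yr yL yR)) (fun i => addAux fL fR (yR i)))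

/-- Sum of pre-games. -/
def add : PGame.{u} → PGame.{u} → PGame.{u}
  | mk _ _ xL xR => addAux (fun i => add (xL i)) (fun j => add (xR j))

instance : Add PGame.{u} := ⟨add⟩

end PGame

end SetTheory

open SetTheory

/-- The partizan game equal to the natural number `n` (in canonical integer form). -/
def natPGame : ℕ → PGame
  | 0 => 0
  | n + 1 => natPGame n + 1

/-- The partizan game equal to the integer `n`. -/
def intPGame (n : ℤ) : PGame :=
  if 0 ≤ n then natPGame n.toNat else -natPGame (-n).toNat

/-- The map ψ from well-tempered scoring games to normal-play partizan games:
ψ(n) = n for integers and ψ({Gᴸ|Gᴿ}) = {ψ(Gᴸ)|ψ(Gᴿ)}. -/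
def psi : WT → PGame
  | WT.int n => intPGame n
  | WT.node L R =>
      PGame.mk {g // g ∈ (WT.node L R).lopts} {g // g ∈ (WT.node L R).ropts}
        (fun g => psi g.1) (fun g => psi g.1)
termination_by G => sizeOf G
decreasing_by
  all_goals
    first
      | exact WT.sizeOf_lt_of_mem_lopts g.2
      | exact WT.sizeOf_lt_of_mem_ropts g.2

section Aux

theorem WT.le_lmax_iff {x : ℤ} {xs : List ℤ} (c : ℤ) :
    c ≤ WT.lmax (x :: xs) ↔ ∃ y ∈ x :: xs, c ≤ y := by
  induction xs generalizing x with
  | nil => simp [WT.lmax]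
  | cons y ys ih =>
    have h1 : WT.lmax (x :: y :: ys) = WT.lmax (max x y :: ys) := rfl
    rw [h1, ih]
    constructor
    · rintro ⟨z, hz, hcz⟩
      rcases List.mem_cons.mp hz with rfl | hz
      · rcases le_max_iff.mp hcz with h | h
        · exact ⟨x, List.mem_cons_self, h⟩
        · exact ⟨y, List.mem_cons_of_mem _ (List.mem_cons_self), h⟩
      · exact ⟨z, List.mem_cons_of_mem _ (List.mem_cons_of_mem _ hz), hcz⟩
    · rintro ⟨z, hz, hcz⟩
      rcases List.mem_cons.mp hz with rfl | hz
      · exact ⟨max z y, List.mem_cons_self, le_max_iff.mpr (Or.inl hcz)⟩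
      rcases List.mem_cons.mp hz with rfl | hz
      · exact ⟨max x z, List.mem_cons_self, le_max_iff.mpr (Or.inr hcz)⟩
      · exact ⟨z, List.mem_cons_of_mem _ hz, hcz⟩

theorem WT.le_lmin_iff {x : ℤ} {xs : List ℤ} (c : ℤ) :
    c ≤ WT.lmin (x :: xs) ↔ ∀ y ∈ x :: xs, c ≤ y := by
  induction xs generalizing x with
  | nil => simp [WT.lmin]
  | cons y ys ih =>
    have h1 : WT.lmin (x :: y :: ys) = WT.lmin (min x y :: ys) := rfl
    rw [h1, ih]
    constructor
    · intro h z hz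
      rcases List.mem_cons.mp hz with rfl | hz
      · exact (le_min_iff.mp (h _ (List.mem_cons_self))).1
      rcases List.mem_cons.mp hz with rfl | hz
      · exact (le_min_iff.mp (h _ (List.mem_cons_self))).2
      · exact h z (List.mem_cons_of_mem _ hz)
    · intro h z hz
      rcases List.mem_cons.mp hz with rfl | hz
      · exact le_min_iff.mpr ⟨h x (List.mem_cons_self),
          h y (List.mem_cons_of_mem _ (List.mem_cons_self))⟩
      · exact h z (List.mem_cons_of_mem _ (List.mem_cons_of_mem _ hz))

namespace SetTheory.PGame

theorem mk_le_mk' {xl xr yl yr : Type u} {xL : xl → PGame.{u}} {xR : xr → PGame.{u}}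
    {yL : yl → PGame.{u}} {yR : yr → PGame.{u}} :
    mk xl xr xL xR ≤ mk yl yr yL yR ↔
      (∀ i, (leLF (xL i) (mk yl yr yL yR)).2) ∧ ∀ j, (leLF (mk xl xr xL xR) (yR j)).2 :=
  Iff.rfl

theorem leLF_mk_snd' {xl xr yl yr : Type u} {xL : xl → PGame.{u}} {xR : xr → PGame.{u}}
    {yL : yl → PGame.{u}} {yR : yr → PGame.{u}} :
    (leLF (mk xl xr xL xR) (mk yl yr yL yR)).2 ↔
      (∃ i, mk xl xr xL xR ≤ yL i) ∨ ∃ j, xR j ≤ mk yl yr yL yR :=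
  Iff.rfl

theorem lf_iff' : ∀ x y : PGame.{u}, ((leLF x y).2 ↔ ¬ y ≤ x) ∧ ((leLF y x).2 ↔ ¬ x ≤ y) := by
  intro x
  induction x with
  | mk xl xr xL xR ihxL ihxR =>
    intro y
    induction y with
    | mk yl yr yL yR ihyL ihyR =>
      have h1 : ∀ i, (leLF (yL i) (mk xl xr xL xR)).2 ↔ ¬ mk xl xr xL xR ≤ yL i :=
        fun i => (ihyL i).2
      have h2 : ∀ j, (leLF (mk yl yr yL yR) (xR j)).2 ↔ ¬ xR j ≤ mk yl yr yL yR :=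
        fun j => (ihxR j _).2
      have h3 : ∀ i, (leLF (xL i) (mk yl yr yL yR)).2 ↔ ¬ mk yl yr yL yR ≤ xL i :=
        fun i => (ihxL i _).1
      have h4 : ∀ j, (leLF (mk xl xr xL xR) (yR j)).2 ↔ ¬ yR j ≤ mk xl xr xL xR :=
        fun j => (ihyR j).1
      constructor
      · rw [leLF_mk_snd', mk_le_mk']
        simp only [h1, h2, not_and_or, not_forall, not_not]
      · rw [leLF_mk_snd', mk_le_mk']
        simp only [h3, h4, not_and_or, not_forall, not_not]

theorem zero_le_lf {yl yr : Type u} {yL : yl → PGame.{u}} {yR : yr → PGame.{u}} :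
    (0 : PGame.{u}) ≤ mk yl yr yL yR ↔ ∀ j, 0 ⧏ yR j := by
  refine Iff.trans (mk_le_mk' (xL := (PEmpty.elim : PEmpty.{u+1} → PGame.{u}))
    (xR := (PEmpty.elim : PEmpty.{u+1} → PGame.{u}))) ?_
  exact ⟨fun h j => ((lf_iff' 0 (yR j)).1).1 (h.2 j),
    fun h => ⟨fun i => i.elim, fun j => ((lf_iff' 0 (yR j)).1).2 (h j)⟩⟩

theorem zero_lf_le {yl yr : Type u} {yL : yl → PGame.{u}} {yR : yr → PGame.{u}} :
    (0 : PGame.{u}) ⧏ mk yl yr yL yR ↔ ∃ i, 0 ≤ yL i := by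
  refine Iff.trans (lf_iff' 0 (mk yl yr yL yR)).1.symm ?_
  refine Iff.trans (leLF_mk_snd' (xL := (PEmpty.elim : PEmpty.{u+1} → PGame.{u}))
    (xR := (PEmpty.elim : PEmpty.{u+1} → PGame.{u}))) ?_
  exact ⟨fun h => h.elim id (fun ⟨j, _⟩ => j.elim), fun h => Or.inl h⟩

end SetTheory.PGame

def pgRight : PGame.{u} → Type u
  | PGame.mk _ r _ _ => r

theorem pgRight_natPGame (n : ℕ) : IsEmpty (pgRight (natPGame.{u} n)) := by
  induction n with
  | zero => exact (inferInstance : IsEmpty PEmpty.{u+1})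
  | succ n ih =>
    change IsEmpty (pgRight (natPGame.{u} n + 1))
    generalize natPGame.{u} n = x at ih ⊢
    cases x with
    | mk l r L R =>
      haveI : IsEmpty r := ih
      exact (inferInstance : IsEmpty (r ⊕ PEmpty.{u+1}))

open SetTheory in
theorem zero_le_natPGame (n : ℕ) : (0 : PGame.{u}) ≤ natPGame.{u} n := by
  have hE := pgRight_natPGame.{u} n
  generalize natPGame.{u} n = x at hE ⊢
  cases x with
  | mk l r L R => exact PGame.zero_le_lf.2 (fun j => (@IsEmpty.false _ hE j).elim)

open SetTheory in
theorem not_zero_le_neg_natPGame_succ (m : ℕ) : ¬ (0 : PGame.{u}) ≤ -natPGame.{u} (m + 1) := by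
  intro hle
  have hE := pgRight_natPGame.{u} m
  change (0 : PGame.{u}) ≤ -(natPGame.{u} m + 1) at hle
  generalize natPGame.{u} m = x at hle hE
  cases x with
  | mk l r L R =>
    obtain ⟨-, h2⟩ := hle
    rcases h2 (Sum.inr PUnit.unit) with ⟨i, -⟩ | ⟨j, -⟩
    · rcases i with i | i
      · exact @IsEmpty.false _ hE i
      · exact i.elim
    · exact j.elim

open SetTheory in
theorem zero_le_intPGame_iff (n : ℤ) : (0 : PGame) ≤ intPGame n ↔ 0 ≤ n := by
  unfold intPGame
  split
  · rename_i h
    simpa [h] using zero_le_natPGame n.toNat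
  · rename_i h
    have hn : 0 < (-n).toNat := by omega
    obtain ⟨m, hm⟩ : ∃ m, (-n).toNat = m + 1 := ⟨(-n).toNat - 1, by omega⟩
    rw [hm]
    apply iff_of_false _ (by omega)
    exact not_zero_le_neg_natPGame_succ m

end Aux

theorem WT.le_lmax_iff' {l : List ℤ} (h : l ≠ []) (c : ℤ) :
    c ≤ WT.lmax l ↔ ∃ x ∈ l, c ≤ x := by
  cases l with
  | nil => exact absurd rfl h
  | cons x xs => exact WT.le_lmax_iff c

theorem WT.le_lmin_iff' {l : List ℤ} (h : l ≠ []) (c : ℤ) :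
    c ≤ WT.lmin l ↔ ∀ x ∈ l, c ≤ x := by
  cases l with
  | nil => exact absurd rfl h
  | cons x xs => exact WT.le_lmin_iff c

theorem WT.isWT_node_inv {L R : List WT} {q : Bool} (h : WT.IsWT (WT.node L R) q) :
    L ≠ [] ∧ R ≠ [] ∧ (∀ g ∈ L, WT.IsWT g (!q)) ∧ (∀ g ∈ R, WT.IsWT g (!q)) := by
  cases h with
  | node hL hR hLp hRp =>
    exact ⟨hL, hR, by simpa using hLp, by simpa using hRp⟩

open scoped PGame in
/-- if G is even-tempered then ψ(G) ≥ 0 iff R(G) ≥ 0; if G is odd-tempered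
then ψ(G) ⊳ 0 (i.e. 0 ⧏ ψ(G)) iff L(G) ≥ 0. -/
theorem psi_outcomes (G : WT) :
    (WT.IsWT G false → (0 ≤ psi G ↔ 0 ≤ G.Rout)) ∧
    (WT.IsWT G true → (0 ⧏ psi G ↔ 0 ≤ G.Lout)) := by
  cases G with
  | int n =>
    refine ⟨fun _ => ?_, fun h => by cases h⟩
    rw [psi, zero_le_intPGame_iff]
    simp [WT.Rout, WT.out]
  | node L R =>
    constructor
    · intro h
      obtain ⟨hL, hR, hLp, hRp⟩ := WT.isWT_node_inv h
      rw [psi, PGame.zero_le_lf]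
      rw [show (WT.node L R).Rout = WT.lmin (((WT.node L R).ropts.attach).map
        fun g => (WT.out g.1).1) from by simp [WT.Rout, WT.out]]
      rw [WT.le_lmin_iff' (by simp [WT.ropts, hR])]
      constructor
      · intro hp x hx
        rw [List.mem_map] at hx
        obtain ⟨g, _, rfl⟩ := hx
        exact ((psi_outcomes g.1).2 (hRp g.1 g.2)).mp (hp g)
      · intro hp j
        refine ((psi_outcomes j.1).2 (hRp j.1 j.2)).mpr ?_
        exact hp _ (List.mem_map.mpr ⟨j, List.mem_attach _ _, rfl⟩)
    · intro h
      obtain ⟨hL, hR, hLp, hRp⟩ := WT.isWT_node_inv h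
      rw [psi, PGame.zero_lf_le]
      rw [show (WT.node L R).Lout = WT.lmax (((WT.node L R).lopts.attach).map
        fun g => (WT.out g.1).2) from by simp [WT.Lout, WT.out]]
      rw [WT.le_lmax_iff' (by simp [WT.lopts, hL])]
      constructor
      · rintro ⟨i, hi⟩
        exact ⟨_, List.mem_map.mpr ⟨i, List.mem_attach _ _, rfl⟩,
          ((psi_outcomes i.1).1 (hLp i.1 i.2)).mp hi⟩
      · rintro ⟨x, hx, hcx⟩
        rw [List.mem_map] at hx
        obtain ⟨g, _, rfl⟩ := hx
        exact ⟨g, ((psi_outcomes g.1).1 (hLp g.1 g.2)).mpr hcx⟩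
termination_by sizeOf G
decreasing_by
  all_goals first
    | exact WT.sizeOf_lt_of_mem_lopts i.2
    | exact WT.sizeOf_lt_of_mem_ropts g.2
    | exact WT.sizeOf_lt_of_mem_lopts g.2
    | exact WT.sizeOf_lt_of_mem_ropts j.2
end
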